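/- arXiv:1710.02501 — 9 statements merged into one kernel-verified Lean document; each statement's English description precedes it below -/
import Mathlib

section
/- If (P,ℒ) is a linear system with maximum degree Δ = 2, then ⌈ν₂/2⌉ ≤ τ ≤ ν₂ − 1, where τ is the transversal number and ν₂ is the 2-packing number of (P,ℒ). -/
open Finset

/-- `(P, L)` is a linear system: lines are nonempty subsets of the point set `P`,
and any two distinct lines share at most one point. -/
def IsLinearSystem {α : Type*} [DecidableEq α] (P : Finset α) (L : Finset (Finset α)) : Prop :=
  (∀ l ∈ L, l.Nonempty) ∧ (∀ l ∈ L, l ⊆ P) ∧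
    ∀ l ∈ L, ∀ l' ∈ L, l ≠ l' → (l ∩ l').card ≤ 1

/-- `T` is a transversal of the linear system `(P, L)`. -/
def IsTransversal {α : Type*} [DecidableEq α] (P : Finset α) (L : Finset (Finset α))
    (T : Finset α) : Prop :=
  T ⊆ P ∧ ∀ l ∈ L, (T ∩ l).Nonempty

/-- The transversal number `τ` of `(P, L)`. -/
noncomputable def tau {α : Type*} [DecidableEq α] (P : Finset α) (L : Finset (Finset α)) : ℕ :=
  sInf {n | ∃ T : Finset α, IsTransversal P L T ∧ T.card = n}

/-- `R` is a 2-packing of `L`: no three distinct lines of `R` have a common point. -/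
def Is2Packing {α : Type*} [DecidableEq α] (L R : Finset (Finset α)) : Prop :=
  R ⊆ L ∧ ∀ l₁ ∈ R, ∀ l₂ ∈ R, ∀ l₃ ∈ R,
    l₁ ≠ l₂ → l₁ ≠ l₃ → l₂ ≠ l₃ → l₁ ∩ l₂ ∩ l₃ = ∅

/-- The 2-packing number `ν₂` of `(P, L)`. -/
noncomputable def nu2 {α : Type*} [DecidableEq α] (L : Finset (Finset α)) : ℕ :=
  sSup {n | ∃ R : Finset (Finset α), Is2Packing L R ∧ R.card = n}

/-- The degree of a point `p`: the number of lines containing `p`. -/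
def degree {α : Type*} [DecidableEq α] (L : Finset (Finset α)) (p : α) : ℕ :=
  (L.filter fun l => p ∈ l).card

/-- The maximum degree `Δ` over all points of `P`. -/
def maxDegree {α : Type*} [DecidableEq α] (P : Finset α) (L : Finset (Finset α)) : ℕ :=
  P.sup (degree L)

/-- In a linear system with maximum degree `Δ = 2`,
`⌈ν₂/2⌉ ≤ τ ≤ ν₂ - 1`. -/
theorem stmt1 {α : Type*} [DecidableEq α] (P : Finset α) (L : Finset (Finset α))
    (hLS : IsLinearSystem P L) (hΔ : maxDegree P L = 2) :
    (nu2 L + 1) / 2 ≤ tau P L ∧ tau P L ≤ nu2 L - 1 := by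
  classical
  -- degree bound: every point of P has degree ≤ 2
  have hdeg : ∀ p ∈ P, degree L p ≤ 2 := by
    intro p hp
    have := Finset.le_sup (f := degree L) hp
    rw [show P.sup (degree L) = 2 from hΔ] at this
    exact this
  -- ν₂ = |L|
  have hLpack : Is2Packing L L := by
    refine ⟨Finset.Subset.refl _, ?_⟩
    intro l₁ h₁ l₂ h₂ l₃ h₃ h12 h13 h23
    by_contra hne
    obtain ⟨p, hp⟩ := Finset.nonempty_iff_ne_empty.mpr hne
    simp only [Finset.mem_inter] at hp
    have hpP : p ∈ P := hLS.2.1 l₁ h₁ hp.1.1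
    have h3le : 3 ≤ degree L p := by
      have hsub : {l₁, l₂, l₃} ⊆ L.filter (fun l => p ∈ l) := by
        intro l hl
        simp only [Finset.mem_insert, Finset.mem_singleton] at hl
        rcases hl with rfl | rfl | rfl <;>
          simp [Finset.mem_filter, h₁, h₂, h₃, hp.1.1, hp.1.2, hp.2]
      have hcard : ({l₁, l₂, l₃} : Finset (Finset α)).card = 3 := by
        rw [Finset.card_insert_of_notMem (by simp [h12, h13]),
          Finset.card_insert_of_notMem (by simp [h23]), Finset.card_singleton]
      calc 3 = ({l₁, l₂, l₃} : Finset (Finset α)).card := hcard.symm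
        _ ≤ _ := Finset.card_le_card hsub
    have := hdeg p hpP
    omega
  have hnu : nu2 L = L.card := by
    apply le_antisymm
    · refine csSup_le ⟨L.card, L, hLpack, rfl⟩ ?_
      rintro n ⟨R, hR, rfl⟩
      exact Finset.card_le_card hR.1
    · exact le_csSup ⟨L.card, by rintro n ⟨R, hR, rfl⟩; exact Finset.card_le_card hR.1⟩
        ⟨L, hLpack, rfl⟩
  -- there is a point of degree 2, giving two distinct lines through it
  have hPne : P.Nonempty := by
    by_contra h
    rw [Finset.not_nonempty_iff_eq_empty] at h
    simp [maxDegree, h] at hΔ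
  obtain ⟨p, hpP, hpdeg⟩ := Finset.exists_mem_eq_sup P hPne (degree L)
  rw [show P.sup (degree L) = 2 from hΔ] at hpdeg
  have h1lt : 1 < (L.filter (fun l => p ∈ l)).card := by
    have : degree L p = 2 := hpdeg.symm
    simp only [degree] at this
    omega
  obtain ⟨l₁, h₁, l₂, h₂, h12⟩ := Finset.one_lt_card.mp h1lt
  simp only [Finset.mem_filter] at h₁ h₂
  -- choice of a point on each line
  set f : Finset α → α := fun l => if h : l.Nonempty then h.choose else p with hf
  have hfmem : ∀ l ∈ L, f l ∈ l := by
    intro l hl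
    have h := hLS.1 l hl
    simp only [hf, dif_pos h]
    exact h.choose_spec
  -- the transversal of size ≤ |L| - 1
  set T : Finset α := insert p (((L.erase l₁).erase l₂).image f) with hT
  have hTtrans : IsTransversal P L T := by
    constructor
    · intro x hx
      simp only [hT, Finset.mem_insert, Finset.mem_image] at hx
      rcases hx with rfl | ⟨l, hl, rfl⟩
      · exact hpP
      · have hlL : l ∈ L := Finset.mem_of_mem_erase (Finset.mem_of_mem_erase hl)
        exact hLS.2.1 l hlL (hfmem l hlL)
    · intro l hl
      by_cases hc : l = l₁ ∨ l = l₂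
      · refine ⟨p, Finset.mem_inter.mpr ⟨Finset.mem_insert_self _ _, ?_⟩⟩
        rcases hc with rfl | rfl
        · exact h₁.2
        · exact h₂.2
      · push_neg at hc
        refine ⟨f l, Finset.mem_inter.mpr ⟨?_, hfmem l hl⟩⟩
        simp only [hT, Finset.mem_insert, Finset.mem_image]
        exact Or.inr ⟨l, Finset.mem_erase.mpr ⟨hc.2, Finset.mem_erase.mpr ⟨hc.1, hl⟩⟩, rfl⟩
  have h2le : 2 ≤ L.card := Finset.one_lt_card.mpr ⟨l₁, h₁.1, l₂, h₂.1, h12⟩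
  have hTcard : T.card ≤ L.card - 1 := by
    have hc1 : T.card ≤ (((L.erase l₁).erase l₂).image f).card + 1 :=
      Finset.card_insert_le _ _
    have hc2 : (((L.erase l₁).erase l₂).image f).card ≤ ((L.erase l₁).erase l₂).card :=
      Finset.card_image_le
    have hc3 : ((L.erase l₁).erase l₂).card = L.card - 2 := by
      rw [Finset.card_erase_of_mem (Finset.mem_erase.mpr ⟨Ne.symm h12, h₂.1⟩),
        Finset.card_erase_of_mem h₁.1]
      omega
    omega
  -- tau set nonempty and upper bound
  have hτub : tau P L ≤ nu2 L - 1 := by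
    rw [hnu]
    calc tau P L ≤ T.card := Nat.sInf_le ⟨T, hTtrans, rfl⟩
      _ ≤ L.card - 1 := hTcard
  refine ⟨?_, hτub⟩
  -- lower bound: take a minimum transversal
  have hset : {n | ∃ T : Finset α, IsTransversal P L T ∧ T.card = n}.Nonempty :=
    ⟨T.card, T, hTtrans, rfl⟩
  obtain ⟨S, hS, hScard⟩ := Nat.sInf_mem hset
  have key : L.card ≤ 2 * S.card := by
    set g : Finset α → α := fun l => if h : (S ∩ l).Nonempty then h.choose else p with hg
    have hgmem : ∀ l ∈ L, g l ∈ S ∩ l := by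
      intro l hl
      have h := hS.2 l hl
      simp only [hg, dif_pos h]
      exact h.choose_spec
    have := Finset.card_le_mul_card_image_of_maps_to
      (f := g) (s := L) (t := S)
      (fun l hl => Finset.mem_inter.mp (hgmem l hl) |>.1) 2 ?_
    · omega
    · intro b hb
      have hsub : L.filter (fun l => g l = b) ⊆ L.filter (fun l => b ∈ l) := by
        intro l hl
        simp only [Finset.mem_filter] at hl ⊢
        refine ⟨hl.1, ?_⟩
        have := Finset.mem_inter.mp (hgmem l hl.1) |>.2
        rwa [hl.2] at this
      calc (L.filter (fun l => g l = b)).card ≤ (L.filter (fun l => b ∈ l)).card :=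
            Finset.card_le_card hsub
        _ = degree L b := rfl
        _ ≤ 2 := hdeg b (hS.1 hb)
  rw [hnu]
  unfold tau
  omega
end

section
/- Let r ≥ 2 and let (P,ℒ) be an r-uniform linear system with maximum degree Δ = 2 in which every point of P lies on at least one line. Then ⌈ν₂/2⌉ ≤ ⌊(|P| + |ℒ|)/(r+1)⌋ ≤ ν₂ − 1, where ν₂ is the 2-packing number of (P,ℒ). -/
open Finset

lemma arith_d (r m d : ℕ) (hD : 2*d ≤ r*m) (hE : 2*d ≤ m*(m-1)) :
    d ≤ (r+1)*(m/2) := by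
  rcases Nat.even_or_odd m with ⟨q, hq⟩ | ⟨q, hq⟩
  · subst hq
    have hq2 : (q + q)/2 = q := by omega
    rw [hq2]
    have : 2*d ≤ 2*((r+1)*q) := by nlinarith
    omega
  · subst hq
    have hq2 : (2*q + 1)/2 = q := by omega
    rw [hq2]
    rcases le_or_gt r (2*q) with h | h
    · have : 2*d ≤ 2*((r+1)*q) := by nlinarith
      omega
    · have : 2*d ≤ 2*((r+1)*q) := by
        have h1 : (2*q+1) - 1 = 2*q := by omega
        rw [h1] at hE
        nlinarith
      omega


/-- In an `r`-uniform linear system (`r ≥ 2`) with `Δ = 2` in which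
every point lies on at least one line,
`⌈ν₂/2⌉ ≤ ⌊(|P| + |ℒ|)/(r+1)⌋ ≤ ν₂ - 1`. -/
theorem stmt2 {α : Type*} [DecidableEq α] (P : Finset α) (L : Finset (Finset α))
    (r : ℕ) (hr : 2 ≤ r) (hLS : IsLinearSystem P L)
    (huniform : ∀ l ∈ L, l.card = r) (hΔ : maxDegree P L = 2)
    (hcov : ∀ p ∈ P, ∃ l ∈ L, p ∈ l) :
    (nu2 L + 1) / 2 ≤ (P.card + L.card) / (r + 1) ∧
      (P.card + L.card) / (r + 1) ≤ nu2 L - 1 := by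
  obtain ⟨hne, hsub, hlin⟩ := hLS
  have hdeg_le : ∀ p ∈ P, degree L p ≤ 2 := fun p hp => hΔ ▸ Finset.le_sup hp
  have hdeg_ge : ∀ p ∈ P, 1 ≤ degree L p := by
    intro p hp
    obtain ⟨l, hl, hpl⟩ := hcov p hp
    exact Finset.card_pos.mpr ⟨l, Finset.mem_filter.mpr ⟨hl, hpl⟩⟩
  -- L itself is a 2-packing
  have hpack : Is2Packing L L := by
    refine ⟨Finset.Subset.refl _, fun l₁ h₁ l₂ h₂ l₃ h₃ h12 h13 h23 => ?_⟩
    apply Finset.eq_empty_of_forall_notMem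
    intro p hp
    simp only [Finset.mem_inter] at hp
    obtain ⟨⟨hp1, hp2⟩, hp3⟩ := hp
    have hsub3 : ({l₁, l₂, l₃} : Finset (Finset α)) ⊆ L.filter (fun l => p ∈ l) := by
      intro l hl
      simp only [Finset.mem_insert, Finset.mem_singleton] at hl
      rcases hl with rfl | rfl | rfl <;> exact Finset.mem_filter.mpr ⟨by assumption, by assumption⟩
    have hc3 : ({l₁, l₂, l₃} : Finset (Finset α)).card = 3 := by
      rw [Finset.card_insert_of_notMem (by simp [h12, h13]),
        Finset.card_insert_of_notMem (by simp [h23])]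
      simp
    have h3le : 3 ≤ degree L p := hc3 ▸ Finset.card_le_card hsub3
    have hple : p ∈ P := hsub l₁ h₁ hp1
    have := hdeg_le p hple
    omega
  -- nu2 L = L.card
  have hnu : nu2 L = L.card := by
    apply le_antisymm
    · refine csSup_le ⟨L.card, L, hpack, rfl⟩ ?_
      rintro n ⟨R, hR, rfl⟩
      exact Finset.card_le_card hR.1
    · exact le_csSup ⟨L.card, by rintro n ⟨R, hR, rfl⟩; exact Finset.card_le_card hR.1⟩
        ⟨L, hpack, rfl⟩
  set m := L.card with hm
  -- double counting: sum of degrees = r * m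
  have hsum : ∑ p ∈ P, degree L p = r * m := by
    unfold degree
    calc ∑ p ∈ P, (L.filter fun l => p ∈ l).card
        = ∑ l ∈ L, (P.filter fun p => p ∈ l).card := by
          simp only [Finset.card_filter]
          exact Finset.sum_comm
      _ = ∑ _l ∈ L, r := by
          refine Finset.sum_congr rfl fun l hl => ?_
          have hfl : P.filter (fun p => p ∈ l) = l := by
            ext p
            simp only [Finset.mem_filter]
            exact ⟨fun h => h.2, fun h => ⟨hsub l hl h, h⟩⟩
          rw [hfl, huniform l hl]
      _ = r * m := by rw [Finset.sum_const, smul_eq_mul, hm, mul_comm]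
  set D2 := P.filter (fun p => degree L p = 2) with hD2
  set d := D2.card with hd
  -- split the degree sum
  have hsplit : ∑ p ∈ D2, degree L p + ∑ p ∈ P.filter (fun p => ¬ degree L p = 2), degree L p
      = r * m := by rw [Finset.sum_filter_add_sum_filter_not]; exact hsum
  have h2 : ∑ p ∈ D2, degree L p = 2 * d := by
    rw [Finset.sum_congr rfl (fun p hp => (Finset.mem_filter.mp hp).2), Finset.sum_const,
      smul_eq_mul, mul_comm]
  have h1 : ∑ p ∈ P.filter (fun p => ¬ degree L p = 2), degree L p
      = (P.filter (fun p => ¬ degree L p = 2)).card := by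
    rw [Finset.sum_congr rfl (fun p hp => ?_), Finset.sum_const, smul_eq_mul, mul_one]
    have hp' := Finset.mem_filter.mp hp
    have := hdeg_le p hp'.1
    have := hdeg_ge p hp'.1
    omega
  have hcard : d + (P.filter (fun p => ¬ degree L p = 2)).card = P.card :=
    Finset.card_filter_add_card_filter_not _
  have keyA : P.card + d = r * m := by omega
  -- at least one point of degree 2
  have hd1 : 1 ≤ d := by
    have hPne : P.Nonempty := by
      rcases P.eq_empty_or_nonempty with h | h
      · unfold maxDegree at hΔ; rw [h] at hΔ; simp at hΔ
      · exact h
    obtain ⟨p, hp, hpd⟩ := Finset.exists_mem_eq_sup P hPne (degree L)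
    refine Finset.card_pos.mpr ⟨p, Finset.mem_filter.mpr ⟨hp, ?_⟩⟩
    unfold maxDegree at hΔ
    omega
  -- 2-packing bound via pairs of lines
  have hE : 2 * d ≤ m * (m - 1) := by
    have hinj : d ≤ (L.powersetCard 2).card := by
      refine Finset.card_le_card_of_injOn (fun p => L.filter (fun l => p ∈ l)) ?_ ?_
      · intro p hp
        exact Finset.mem_powersetCard.mpr ⟨Finset.filter_subset _ _,
          (Finset.mem_filter.mp hp).2⟩
      · intro p hp q hq heq
        by_contra hpq
        have hdp : (L.filter (fun l => p ∈ l)).card = 2 := (Finset.mem_filter.mp hp).2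
        obtain ⟨l₁, l₂, h12, hset⟩ := Finset.card_eq_two.mp hdp
        have hl₁ : l₁ ∈ L.filter (fun l => p ∈ l) := by rw [hset]; simp
        have hl₂ : l₂ ∈ L.filter (fun l => p ∈ l) := by rw [hset]; simp
        have heq' : L.filter (fun l => p ∈ l) = L.filter (fun l => q ∈ l) := heq
        have hl₁' : l₁ ∈ L.filter (fun l => q ∈ l) := by rw [← heq']; exact hl₁
        have hl₂' : l₂ ∈ L.filter (fun l => q ∈ l) := by rw [← heq']; exact hl₂
        simp only [Finset.mem_filter] at hl₁ hl₂ hl₁' hl₂'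
        have hsub2 : ({p, q} : Finset α) ⊆ l₁ ∩ l₂ := by
          intro x hx
          simp only [Finset.mem_insert, Finset.mem_singleton] at hx
          rcases hx with rfl | rfl <;>
            exact Finset.mem_inter.mpr ⟨by tauto, by tauto⟩
        have : 2 ≤ (l₁ ∩ l₂).card := by
          have := Finset.card_le_card hsub2
          rwa [Finset.card_insert_of_notMem (by simp [hpq]), Finset.card_singleton] at this
        have := hlin l₁ hl₁.1 l₂ hl₂.1 h12
        omega
    rw [Finset.card_powersetCard, ← hm] at hinj
    have hch := Nat.choose_two_right m
    calc 2 * d ≤ 2 * (m * (m-1) / 2) := by rw [← hch]; omega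
      _ ≤ m * (m - 1) := by rw [mul_comm]; exact Nat.div_mul_le_self _ 2
  have hDD : 2 * d ≤ r * m := by
    have hdP : d ≤ P.card := Finset.card_filter_le _ _
    linarith
  have hkey : d ≤ (r + 1) * (m / 2) := arith_d r m d hDD hE
  have hring : m * (r + 1) = r * m + m := by ring
  constructor
  · rw [hnu, Nat.le_div_iff_mul_le (by omega : 0 < r + 1)]
    have hhalf : (m + 1) / 2 + m / 2 = m := by omega
    have hsumineq : ((m + 1) / 2) * (r + 1) + d ≤ m * (r + 1) := by
      calc ((m + 1) / 2) * (r + 1) + d ≤ ((m + 1) / 2) * (r + 1) + (r + 1) * (m / 2) :=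
            Nat.add_le_add_left hkey _
        _ = m * (r + 1) := by
            rw [mul_comm ((m + 1) / 2) (r + 1), ← Nat.mul_add, hhalf, mul_comm]
    linarith
  · rw [hnu]
    have hlt : P.card + m < m * (r + 1) := by linarith
    exact Nat.le_pred_of_lt ((Nat.div_lt_iff_lt_mul (by omega : 0 < r + 1)).mpr hlt)
end

section
/- Let r ≥ 2 and let (P,ℒ) be an r-uniform linear system whose 2-packing number ν₂ satisfies ν₂ − 1 ≤ r. Then (r+1)·⌈ν₂/2⌉ ≤ |P| + |ℒ| (equivalently, ⌈ν₂/2⌉ ≤ (|P| + |ℒ|)/(r+1)). -/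
open Finset

lemma union_lb {α : Type*} [DecidableEq α] (R : Finset (Finset α))
    (h : ∀ l ∈ R, ∀ l' ∈ R, l ≠ l' → (l ∩ l').card ≤ 1) :
    2 * ∑ l ∈ R, l.card + R.card ≤ 2 * (R.biUnion id).card + R.card * R.card := by
  induction R using Finset.induction_on with
  | empty => simp
  | @insert l R hl ih =>
    have hpair : ∀ a ∈ R, ∀ b ∈ R, a ≠ b → (a ∩ b).card ≤ 1 := fun a ha b hb hab =>
      h a (mem_insert_of_mem ha) b (mem_insert_of_mem hb) hab
    have ihr := ih hpair
    have hI : (l ∩ R.biUnion id).card ≤ R.card := by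
      have : l ∩ R.biUnion id = R.biUnion (fun l' => l ∩ l') := by
        ext x; simp; tauto
      rw [this]
      calc (R.biUnion fun l' => l ∩ l').card ≤ ∑ l' ∈ R, (l ∩ l').card :=
            card_biUnion_le
        _ ≤ ∑ _l' ∈ R, 1 := by
            apply Finset.sum_le_sum
            intro l' hl'
            exact h l (mem_insert_self l R) l' (mem_insert_of_mem hl')
              (fun he => hl (he ▸ hl'))
        _ = R.card := by simp
    have hE : (l ∪ R.biUnion id).card + (l ∩ R.biUnion id).card
        = l.card + (R.biUnion id).card := Finset.card_union_add_card_inter l _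
    rw [Finset.sum_insert hl, Finset.card_insert_of_notMem hl,
      Finset.biUnion_insert, id_eq]
    have hsq : (R.card + 1) * (R.card + 1) = R.card * R.card + 2 * R.card + 1 := by ring
    omega


/-- In an `r`-uniform linear system (`r ≥ 2`) with `ν₂ - 1 ≤ r`,
`(r+1)·⌈ν₂/2⌉ ≤ |P| + |ℒ|`. -/
theorem stmt3 {α : Type*} [DecidableEq α] (P : Finset α) (L : Finset (Finset α))
    (r : ℕ) (hr : 2 ≤ r) (hLS : IsLinearSystem P L)
    (huniform : ∀ l ∈ L, l.card = r) (hν : nu2 L - 1 ≤ r) :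
    (r + 1) * ((nu2 L + 1) / 2) ≤ P.card + L.card := by
  -- the supremum is attained
  have hne : {n | ∃ R : Finset (Finset α), Is2Packing L R ∧ R.card = n}.Nonempty :=
    ⟨0, ∅, ⟨Finset.empty_subset _, by simp⟩, Finset.card_empty⟩
  have hbdd : BddAbove {n | ∃ R : Finset (Finset α), Is2Packing L R ∧ R.card = n} :=
    ⟨L.card, fun n ⟨R, hR, hc⟩ => hc ▸ Finset.card_le_card hR.1⟩
  have hmem : nu2 L ∈ {n | ∃ R : Finset (Finset α), Is2Packing L R ∧ R.card = n} :=
    Nat.sSup_mem hne hbdd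
  obtain ⟨R, hR, hcard⟩ := hmem
  set ν := nu2 L with hνdef
  have hpair : ∀ l ∈ R, ∀ l' ∈ R, l ≠ l' → (l ∩ l').card ≤ 1 := fun l hl l' hl' hne' =>
    hLS.2.2 l (hR.1 hl) l' (hR.1 hl') hne'
  have hkey := union_lb R hpair
  have hsum : ∑ l ∈ R, l.card = ν * r := by
    rw [Finset.sum_congr rfl (fun l hl => huniform l (hR.1 hl))]
    simp [hcard, Finset.sum_const, Nat.mul_comm]
  have hUP : (R.biUnion id).card ≤ P.card :=
    Finset.card_le_card (Finset.biUnion_subset.2 fun l hl => hLS.2.1 l (hR.1 hl))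
  have hm : ν ≤ L.card := hcard ▸ Finset.card_le_card hR.1
  have key : 2 * (ν * r) + ν ≤ 2 * P.card + ν * ν := by
    rw [← hsum, ← hcard] at *; omega
  have hν' : ν ≤ r + 1 := by omega
  set k := (ν + 1) / 2 with hkdef
  have hk : 2 * k = ν ∨ 2 * k = ν + 1 := by omega
  rcases hk with hk | hk
  · have hmul : 2 * k * (2 * k) ≤ 2 * k * (r + 2) := Nat.mul_le_mul_left _ (by omega)
    nlinarith [key, hm, hk, hν']
  · have hk1 : 1 ≤ k := by omega
    have hmul : (k - 1) * (2 * k - 2) ≤ (k - 1) * r := Nat.mul_le_mul_left _ (by omega)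
    zify [hk1, show 2 ≤ 2*k from by omega] at hmul ⊢
    nlinarith [key, hm, hk, hν', hmul]
end

section
/- Let r ≥ 2 and let (P,ℒ) be an r-uniform linear system with 2-packing number ν₂ satisfying ν₂ − 1 ≤ r and whose transversal number satisfies τ = ⌈ν₂/2⌉. Then (r+1)·τ ≤ |P| + |ℒ| (equivalently, τ ≤ (|P| + |ℒ|)/(r+1)). -/
open Finset

lemma count_lemma {α : Type*} [DecidableEq α] (P : Finset α) (L R : Finset (Finset α)) (r : ℕ)
    (hLS : IsLinearSystem P L) (hR : Is2Packing L R) (hu : ∀ l ∈ L, l.card = r) :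
    R.card * r ≤ (R.biUnion id).card + R.card.choose 2 := by
  set U := R.biUnion id with hU
  set d : α → ℕ := fun p => (R.filter fun l => p ∈ l).card with hd
  have hsum : ∑ p ∈ U, d p = R.card * r := by
    have : ∑ p ∈ U, d p = ∑ l ∈ R, (U.filter fun p => p ∈ l).card := by
      simp only [hd, card_filter]
      rw [Finset.sum_comm]
    rw [this]
    rw [Finset.sum_congr rfl (fun l hl => ?_), Finset.sum_const, smul_eq_mul]
    have hlU : l ⊆ U := fun p hp => Finset.mem_biUnion.mpr ⟨l, hl, hp⟩
    have : U.filter (fun p => p ∈ l) = l := by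
      ext p; simp only [mem_filter]
      exact ⟨fun h => h.2, fun h => ⟨hlU h, h⟩⟩
    rw [this, hu l (hR.1 hl)]
  have hd1 : ∀ p ∈ U, 1 ≤ d p := by
    intro p hp
    obtain ⟨l, hl, hpl⟩ := Finset.mem_biUnion.mp hp
    exact Finset.card_pos.mpr ⟨l, Finset.mem_filter.mpr ⟨hl, hpl⟩⟩
  have hd2 : ∀ p ∈ U, d p ≤ 2 := by
    intro p hp
    by_contra h
    push_neg at h
    obtain ⟨l₁, l₂, l₃, h₁, h₂, h₃, h12, h13, h23⟩ := Finset.two_lt_card_iff.mp h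
    have e := hR.2 l₁ (Finset.mem_filter.mp h₁).1 l₂ (Finset.mem_filter.mp h₂).1
      l₃ (Finset.mem_filter.mp h₃).1 h12 h13 h23
    have : p ∈ l₁ ∩ l₂ ∩ l₃ := by
      simp [Finset.mem_inter, (Finset.mem_filter.mp h₁).2, (Finset.mem_filter.mp h₂).2,
        (Finset.mem_filter.mp h₃).2]
    rw [e] at this
    exact absurd this (Finset.notMem_empty p)
  have hsplit : ∑ p ∈ U, d p ≤ U.card + (U.filter fun p => d p = 2).card := by
    calc ∑ p ∈ U, d p ≤ ∑ p ∈ U, (1 + if d p = 2 then 1 else 0) := by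
          apply Finset.sum_le_sum
          intro p hp
          rcases Nat.lt_or_ge (d p) 2 with h | h
          · have := hd1 p hp; interval_cases h' : d p <;> simp_all
          · have h2 := hd2 p hp
            have : d p = 2 := le_antisymm h2 h
            simp [this]
      _ = U.card + (U.filter fun p => d p = 2).card := by
          rw [Finset.sum_add_distrib, Finset.sum_const, smul_eq_mul, mul_one,
            ← Finset.card_filter]
  have hinj : (U.filter fun p => d p = 2).card ≤ R.card.choose 2 := by
    rw [← Finset.card_powersetCard 2 R]
    apply Finset.card_le_card_of_injOn (fun p => R.filter fun l => p ∈ l)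
    · intro p hp
      rw [Finset.mem_coe, Finset.mem_powersetCard]
      exact ⟨Finset.filter_subset _ _, (Finset.mem_filter.mp hp).2⟩
    · intro p hp q hq heq
      by_contra hne
      have hp2 := (Finset.mem_filter.mp hp).2
      have hp2' : 1 < (R.filter fun l => p ∈ l).card := by
        have : d p = 2 := hp2
        simp only [hd] at this; omega
      obtain ⟨l₁, h₁, l₂, h₂, h12⟩ := Finset.one_lt_card.mp hp2'
      have heq2 : (R.filter fun l => p ∈ l) = R.filter fun l => q ∈ l := heq
      have hq1 : l₁ ∈ R.filter fun l => q ∈ l := heq2 ▸ h₁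
      have hq2 : l₂ ∈ R.filter fun l => q ∈ l := heq2 ▸ h₂
      have hcard : 1 < (l₁ ∩ l₂).card := by
        apply Finset.one_lt_card.mpr
        refine ⟨p, ?_, q, ?_, hne⟩
        · simp [Finset.mem_inter, (Finset.mem_filter.mp h₁).2, (Finset.mem_filter.mp h₂).2]
        · simp [Finset.mem_inter, (Finset.mem_filter.mp hq1).2, (Finset.mem_filter.mp hq2).2]
      have := hLS.2.2 l₁ (hR.1 (Finset.mem_filter.mp h₁).1) l₂ (hR.1 (Finset.mem_filter.mp h₂).1) h12
      omega
  calc R.card * r = ∑ p ∈ U, d p := hsum.symm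
    _ ≤ U.card + (U.filter fun p => d p = 2).card := hsplit
    _ ≤ U.card + R.card.choose 2 := by omega

/-- In an `r`-uniform linear system (`r ≥ 2`) with `ν₂ - 1 ≤ r` and
`τ = ⌈ν₂/2⌉`, we have `(r+1)·τ ≤ |P| + |ℒ|`. -/
theorem stmt4 {α : Type*} [DecidableEq α] (P : Finset α) (L : Finset (Finset α))
    (r : ℕ) (hr : 2 ≤ r) (hLS : IsLinearSystem P L)
    (huniform : ∀ l ∈ L, l.card = r) (hν : nu2 L - 1 ≤ r)
    (hτ : tau P L = (nu2 L + 1) / 2) :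
    (r + 1) * tau P L ≤ P.card + L.card := by
  by_cases hL : L = ∅
  · have h0 : tau P L = 0 := by
      apply Nat.sInf_eq_zero.mpr
      exact Or.inl ⟨∅, ⟨Finset.empty_subset P, fun l hl => by simp [hL] at hl⟩, Finset.card_empty⟩
    simp [h0]
  · have hLne : L.Nonempty := Finset.nonempty_iff_ne_empty.mpr hL
    have hbdd : BddAbove {n | ∃ R : Finset (Finset α), Is2Packing L R ∧ R.card = n} := by
      refine ⟨L.card, ?_⟩
      rintro n ⟨R, hR, rfl⟩
      exact Finset.card_le_card hR.1
    have hmem : nu2 L ∈ {n | ∃ R : Finset (Finset α), Is2Packing L R ∧ R.card = n} := by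
      refine Nat.sSup_mem ⟨0, ?_⟩ hbdd
      exact ⟨∅, ⟨Finset.empty_subset L, by simp⟩, Finset.card_empty⟩
    obtain ⟨R, hR, hcard⟩ := hmem
    obtain ⟨l₀, hl₀⟩ := hLne
    have hν1 : 1 ≤ nu2 L := by
      apply le_csSup hbdd
      refine ⟨{l₀}, ⟨Finset.singleton_subset_iff.mpr hl₀, ?_⟩, Finset.card_singleton l₀⟩
      intro l₁ h₁ l₂ h₂ l₃ h₃ h12 _ _
      simp only [Finset.mem_singleton] at h₁ h₂
      exact absurd (h₁.trans h₂.symm) h12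
    obtain ⟨m, hm⟩ : ∃ m, nu2 L = m + 1 := ⟨nu2 L - 1, by omega⟩
    have hmr : m ≤ r := by omega
    have hLcard : m + 1 ≤ L.card := by
      rw [← hm, ← hcard]; exact Finset.card_le_card hR.1
    have hPcard : (R.biUnion id).card ≤ P.card := by
      apply Finset.card_le_card
      intro p hp
      obtain ⟨l, hl, hpl⟩ := Finset.mem_biUnion.mp hp
      exact hLS.2.1 l (hR.1 hl) hpl
    have hcount := count_lemma P L R r hLS hR huniform
    rw [hcard, hm] at hcount
    have h2ch : 2 * (m + 1).choose 2 = (m + 1) * m := by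
      rw [Nat.choose_two_right]
      simp only [Nat.add_sub_cancel]
      obtain ⟨k, hk⟩ : Even ((m + 1) * m) := by rw [mul_comm]; exact Nat.even_mul_succ_self m
      omega
    have key : (r + 1) * (m + 2) ≤ 2 * (P.card + L.card) := by
      have hmm : m * m ≤ r * m := Nat.mul_le_mul_right m hmr
      nlinarith [hcount, h2ch, hLcard, hPcard]
    rw [hτ, hm]
    obtain ⟨q, hq⟩ : ∃ q, (m + 1 + 1) / 2 = q ∧ 2 * q ≤ m + 2 := ⟨(m + 2) / 2, by omega, by omega⟩
    rw [hq.1]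
    have h2 : 2 * ((r + 1) * q) ≤ 2 * (P.card + L.card) := by
      calc 2 * ((r + 1) * q) = (r + 1) * (2 * q) := by ring
        _ ≤ (r + 1) * (m + 2) := Nat.mul_le_mul_left _ hq.2
        _ ≤ 2 * (P.card + L.card) := key
    exact Nat.le_of_mul_le_mul_left h2 (by norm_num)
end

section
/- Let r ≥ 2 and let (P,ℒ) be an r-uniform intersecting linear system with maximum degree Δ = 2. Then (r+1)·τ ≤ |P| + |ℒ| (equivalently, τ ≤ (|P| + |ℒ|)/(r+1)), where τ is the transversal number of (P,ℒ). -/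
open Finset

lemma deg_le_two {α : Type*} [DecidableEq α] {P : Finset α} {L : Finset (Finset α)}
    (hΔ : maxDegree P L = 2) {p : α} (hp : p ∈ P) : degree L p ≤ 2 := by
  have h : degree L p ≤ maxDegree P L := Finset.le_sup hp
  omega

lemma three_lines {α : Type*} [DecidableEq α] {P : Finset α} {L : Finset (Finset α)}
    (hsub : ∀ l ∈ L, l ⊆ P) (hΔ : maxDegree P L = 2)
    {p : α} {l1 l2 l3 : Finset α} (h1 : l1 ∈ L) (h2 : l2 ∈ L) (h3 : l3 ∈ L)
    (h12 : l1 ≠ l2) (h13 : l1 ≠ l3) (h23 : l2 ≠ l3)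
    (hp1 : p ∈ l1) (hp2 : p ∈ l2) (hp3 : p ∈ l3) : False := by
  have hpP : p ∈ P := hsub l1 h1 hp1
  have hd : degree L p ≤ 2 := deg_le_two hΔ hpP
  have hsub3 : ({l1, l2, l3} : Finset (Finset α)) ⊆ L.filter (fun l => p ∈ l) := by
    intro x hx
    simp only [mem_insert, mem_singleton] at hx
    rcases hx with rfl | rfl | rfl <;> simp [Finset.mem_filter, *]
  have hc : ({l1, l2, l3} : Finset (Finset α)).card = 3 := by
    rw [card_insert_of_notMem (by simp [h12, h13]),
      card_insert_of_notMem (by simp [h23]), card_singleton]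
  have h3' : 3 ≤ degree L p := by
    calc 3 = ({l1, l2, l3} : Finset (Finset α)).card := hc.symm
    _ ≤ _ := card_le_card hsub3
  omega

lemma exists_small_transversal {α : Type*} [DecidableEq α] (P : Finset α) :
    ∀ L : Finset (Finset α), (∀ l ∈ L, l.Nonempty) → (∀ l ∈ L, l ⊆ P) →
    (∀ l ∈ L, ∀ l' ∈ L, l ≠ l' → (l ∩ l').Nonempty) →
    ∃ T, IsTransversal P L T ∧ 2 * T.card ≤ L.card + 1 := by
  intro L
  induction L using Finset.strongInduction with
  | _ L ih =>
    intro hne hsub hint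
    rcases Finset.eq_empty_or_nonempty L with rfl | ⟨l, hl⟩
    · exact ⟨∅, ⟨empty_subset _, by simp⟩, by simp⟩
    by_cases hsing : L = {l}
    · obtain ⟨p, hp⟩ := hne l hl
      refine ⟨{p}, ⟨by simpa using hsub l hl hp, ?_⟩, by simp [hsing]⟩
      intro m hm
      rw [hsing, mem_singleton] at hm
      subst hm
      exact ⟨p, by simp [hp]⟩
    · have h1lt : 1 < L.card := by
        by_contra h
        push_neg at h
        have hc1 : L.card = 1 := le_antisymm h (card_pos.mpr ⟨l, hl⟩)
        obtain ⟨a, ha⟩ := card_eq_one.mp hc1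
        subst ha
        rw [mem_singleton] at hl
        exact hsing (by rw [hl])
      obtain ⟨l', hl', hll'⟩ := Finset.exists_mem_ne h1lt l
      obtain ⟨p, hp⟩ := hint l hl l' hl' (Ne.symm hll')
      rw [mem_inter] at hp
      have hpair : ({l, l'} : Finset (Finset α)) ⊆ L := by
        intro x hx
        simp only [mem_insert, mem_singleton] at hx
        rcases hx with rfl | rfl <;> assumption
      have hss : L \ {l, l'} ⊂ L :=
        Finset.sdiff_ssubset hpair ⟨l, by simp⟩
      obtain ⟨T', hT', hcard⟩ := ih (L \ {l, l'}) hss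
        (fun m hm => hne m (mem_sdiff.mp hm).1)
        (fun m hm => hsub m (mem_sdiff.mp hm).1)
        (fun m hm m' hm' h => hint m (mem_sdiff.mp hm).1 m' (mem_sdiff.mp hm').1 h)
      refine ⟨insert p T', ⟨insert_subset (hsub l hl hp.1) hT'.1, ?_⟩, ?_⟩
      · intro m hm
        by_cases h : m = l ∨ m = l'
        · rcases h with rfl | rfl
          · exact ⟨p, mem_inter.mpr ⟨mem_insert_self _ _, hp.1⟩⟩
          · exact ⟨p, mem_inter.mpr ⟨mem_insert_self _ _, hp.2⟩⟩
        · push_neg at h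
          have hm2 : m ∈ L \ {l, l'} := mem_sdiff.mpr ⟨hm, by simp [h.1, h.2]⟩
          obtain ⟨q, hq⟩ := hT'.2 m hm2
          rw [mem_inter] at hq
          exact ⟨q, mem_inter.mpr ⟨mem_insert_of_mem hq.1, hq.2⟩⟩
      · have hc2 : (L \ {l, l'}).card + ({l, l'} : Finset (Finset α)).card = L.card :=
          Finset.card_sdiff_add_card_eq_card hpair
        have hcc : ({l, l'} : Finset (Finset α)).card = 2 := by
          rw [card_insert_of_notMem (by simp [hll'.symm]), card_singleton]
        have := card_insert_le p T'
        omega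
/-- In an `r`-uniform intersecting linear system (`r ≥ 2`) with `Δ = 2`,
`(r+1)·τ ≤ |P| + |ℒ|`. -/
theorem stmt5 {α : Type*} [DecidableEq α] (P : Finset α) (L : Finset (Finset α))
    (r : ℕ) (hr : 2 ≤ r) (hLS : IsLinearSystem P L)
    (huniform : ∀ l ∈ L, l.card = r)
    (hint : ∀ l ∈ L, ∀ l' ∈ L, l ≠ l' → (l ∩ l').card = 1)
    (hΔ : maxDegree P L = 2) :
    (r + 1) * tau P L ≤ P.card + L.card := by
  obtain ⟨hne, hsub, hmax1⟩ := hLS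
  obtain ⟨T, hT, hTcard⟩ := exists_small_transversal P L hne hsub
    (fun l hl l' hl' h => card_pos.mp (by rw [hint l hl l' hl' h]; norm_num))
  have htau : tau P L ≤ T.card := Nat.sInf_le ⟨T, hT, rfl⟩
  rcases Nat.eq_zero_or_pos L.card with hm0 | hmpos
  · have h0 : tau P L = 0 := by omega
    simp [h0]
  obtain ⟨l₀, hl₀⟩ := card_pos.mp hmpos
  -- m ≤ r + 1
  obtain ⟨p₀, hp₀⟩ := hne l₀ hl₀
  have hmr : L.card ≤ r + 1 := by
    have hkey : (L.erase l₀).card ≤ l₀.card := by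
      apply Finset.card_le_card_of_injOn
        (fun l' => if h : (l₀ ∩ l').Nonempty then h.choose else p₀)
      · intro l' hl'
        rw [Finset.mem_coe, mem_erase] at hl'
        have hne' : (l₀ ∩ l').Nonempty :=
          card_pos.mp (by rw [hint l₀ hl₀ l' hl'.2 (Ne.symm hl'.1)]; norm_num)
        simp only [dif_pos hne']
        exact (mem_inter.mp hne'.choose_spec).1
      · intro l1 h1 l2 h2 heq
        simp only [Finset.mem_coe, mem_erase] at h1 h2
        by_contra hne12
        have hne1 : (l₀ ∩ l1).Nonempty :=
          card_pos.mp (by rw [hint l₀ hl₀ l1 h1.2 (Ne.symm h1.1)]; norm_num)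
        have hne2 : (l₀ ∩ l2).Nonempty :=
          card_pos.mp (by rw [hint l₀ hl₀ l2 h2.2 (Ne.symm h2.1)]; norm_num)
        replace heq : hne1.choose = hne2.choose := by
          simpa only [dif_pos hne1, dif_pos hne2] using heq
        have hq1 := mem_inter.mp hne1.choose_spec
        have hq2 := mem_inter.mp hne2.choose_spec
        rw [heq] at hq1
        exact three_lines hsub hΔ hl₀ h1.2 h2.2 (Ne.symm h1.1) (Ne.symm h2.1)
          hne12 hq1.1 (by rw [← heq]; exact (mem_inter.mp hne1.choose_spec).2) hq2.2
    rw [huniform l₀ hl₀] at hkey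
    have := card_erase_of_mem hl₀
    omega
  -- degree sum
  have hdegsum : ∑ p ∈ P, degree L p = L.card * r := by
    have hswap : ∑ p ∈ P, degree L p = ∑ l ∈ L, (P.filter fun p => p ∈ l).card := by
      simp only [degree, Finset.card_filter]
      rw [Finset.sum_comm]
    rw [hswap]
    rw [Finset.sum_congr rfl (fun l hl => ?_), Finset.sum_const, smul_eq_mul]
    have hfl : P.filter (fun p => p ∈ l) = l := by
      rw [Finset.filter_mem_eq_inter, Finset.inter_eq_right.mpr (hsub l hl)]
    rw [hfl, huniform l hl]
  -- number of degree-2 points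
  have hD2 : (P.filter fun p => degree L p = 2).card ≤ L.card.choose 2 := by
    have : (P.filter fun p => degree L p = 2).card ≤ (L.powersetCard 2).card := by
      apply Finset.card_le_card_of_injOn (fun p => L.filter fun l => p ∈ l)
      · intro p hp
        rw [Finset.mem_coe, mem_filter] at hp
        exact Finset.mem_powersetCard.mpr ⟨Finset.filter_subset _ _, hp.2⟩
      · intro p hp q hq heq
        simp only [Finset.mem_coe, mem_filter] at hp hq
        replace heq : L.filter (fun l => p ∈ l) = L.filter (fun l => q ∈ l) := heq
        by_contra hpq
        obtain ⟨l1, l2, h12, hset⟩ := card_eq_two.mp hp.2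
        have hp1 : p ∈ l1 := by
          have : l1 ∈ L.filter fun l => p ∈ l := by rw [hset]; simp
          exact (mem_filter.mp this).2
        have hp2 : p ∈ l2 := by
          have : l2 ∈ L.filter fun l => p ∈ l := by rw [hset]; simp
          exact (mem_filter.mp this).2
        have hq1 : q ∈ l1 := by
          have : l1 ∈ L.filter fun l => q ∈ l := by rw [← heq, hset]; simp
          exact (mem_filter.mp this).2
        have hq2 : q ∈ l2 := by
          have : l2 ∈ L.filter fun l => q ∈ l := by rw [← heq, hset]; simp
          exact (mem_filter.mp this).2
        have hl1L : l1 ∈ L := by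
          have : l1 ∈ L.filter fun l => p ∈ l := by rw [hset]; simp
          exact (mem_filter.mp this).1
        have hl2L : l2 ∈ L := by
          have : l2 ∈ L.filter fun l => p ∈ l := by rw [hset]; simp
          exact (mem_filter.mp this).1
        have h2le : 2 ≤ (l1 ∩ l2).card := by
          have : ({p, q} : Finset α) ⊆ l1 ∩ l2 := by
            intro x hx
            simp only [mem_insert, mem_singleton] at hx
            rcases hx with rfl | rfl <;> exact mem_inter.mpr ⟨by assumption, by assumption⟩
          calc 2 = ({p, q} : Finset α).card := by
                rw [card_insert_of_notMem (by simp [hpq]), card_singleton]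
          _ ≤ _ := card_le_card this
        have := hmax1 l1 hl1L l2 hl2L h12
        omega
    rwa [Finset.card_powersetCard] at this
  have hPcard : L.card * r ≤ P.card + L.card.choose 2 := by
    have hle : ∑ p ∈ P, degree L p ≤
        ∑ p ∈ P, (1 + if degree L p = 2 then 1 else 0) := by
      apply Finset.sum_le_sum
      intro p hp
      have := deg_le_two hΔ hp
      split_ifs <;> omega
    rw [hdegsum] at hle
    rw [Finset.sum_add_distrib, Finset.sum_const, smul_eq_mul, mul_one,
      Finset.sum_boole] at hle
    simp only [Nat.cast_id] at hle
    omega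
  obtain ⟨k, hk⟩ : ∃ k, L.card = k + 1 := ⟨L.card - 1, by omega⟩
  have hkr : k ≤ r := by omega
  have h1 : 2 * tau P L ≤ k + 2 := by omega
  rw [hk] at hPcard
  have hch : 2 * (k + 1).choose 2 ≤ (k + 1) * k := by
    rw [Nat.choose_two_right]
    simp only [Nat.add_sub_cancel]
    rw [mul_comm]
    exact Nat.div_mul_le_self _ _
  have h2 : 2 * ((k + 1) * r) ≤ 2 * P.card + (k + 1) * k := by omega
  have hmul1 : (r + 1) * (2 * tau P L) ≤ (r + 1) * (k + 2) :=
    Nat.mul_le_mul_left _ h1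
  have hmul2 : k * k ≤ k * r := Nat.mul_le_mul_left _ hkr
  rw [hk]
  nlinarith [hmul1, hmul2, h2]
end

section
/- Let r ≥ 2 and let (P,ℒ) be an r-uniform linear system with at least one line and with maximum degree Δ satisfying Δ ≥ ν₂ − 1, where ν₂ is the 2-packing number. Then (ν₂ − 1)·(r+1) ≤ |P| + |ℒ| (equivalently, ν₂ − 1 ≤ (|P| + |ℒ|)/(r+1)). -/
open Finset

/-- In an `r`-uniform linear system (`r ≥ 2`) with at least one line
and `Δ ≥ ν₂ - 1`, we have `(ν₂ - 1)·(r+1) ≤ |P| + |ℒ|`. -/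
theorem stmt6 {α : Type*} [DecidableEq α] (P : Finset α) (L : Finset (Finset α))
    (r : ℕ) (hr : 2 ≤ r) (hLS : IsLinearSystem P L)
    (huniform : ∀ l ∈ L, l.card = r) (hL : L.Nonempty)
    (hΔ : nu2 L - 1 ≤ maxDegree P L) :
    (nu2 L - 1) * (r + 1) ≤ P.card + L.card := by
  classical
  set ν := nu2 L with hν
  rcases Nat.lt_or_ge ν 2 with hν2 | hν2
  · have : ν - 1 = 0 := by omega
    simp [this]
  -- obtain a packing of size ν
  have hbdd : BddAbove {n | ∃ R : Finset (Finset α), Is2Packing L R ∧ R.card = n} := by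
    refine ⟨L.card, fun n hn => ?_⟩
    obtain ⟨R, hR, rfl⟩ := hn
    exact Finset.card_le_card hR.1
  have hne : {n | ∃ R : Finset (Finset α), Is2Packing L R ∧ R.card = n}.Nonempty :=
    ⟨0, ∅, ⟨Finset.empty_subset _, by simp⟩, by simp⟩
  have hmem : ν ∈ {n | ∃ R : Finset (Finset α), Is2Packing L R ∧ R.card = n} :=
    Nat.sSup_mem hne hbdd
  obtain ⟨R, hRpack, hRcard⟩ := hmem
  -- obtain a point of max degree
  have hPne : P.Nonempty := by
    obtain ⟨l, hl⟩ := hL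
    obtain ⟨x, hx⟩ := hLS.1 l hl
    exact ⟨x, hLS.2.1 l hl hx⟩
  obtain ⟨p, hpP, hpdeg⟩ := Finset.exists_mem_eq_sup P hPne (degree L)
  have hdeg : ν - 1 ≤ degree L p := by
    rw [← hpdeg]; exact hΔ
  set Lp := L.filter (fun l => p ∈ l) with hLp
  have hLpcard : Lp.card = degree L p := rfl
  -- points bound
  have hdisj : ∀ l₁ ∈ Lp, ∀ l₂ ∈ Lp, l₁ ≠ l₂ → Disjoint (l₁.erase p) (l₂.erase p) := by
    intro l₁ h₁ l₂ h₂ hne12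
    rw [Finset.mem_filter] at h₁ h₂
    rw [Finset.disjoint_left]
    intro x hx₁ hx₂
    have hxp : x ≠ p := Finset.ne_of_mem_erase hx₁
    have hcard := hLS.2.2 l₁ h₁.1 l₂ h₂.1 hne12
    have hsub : {x, p} ⊆ l₁ ∩ l₂ := by
      intro y hy
      rcases Finset.mem_insert.mp hy with rfl | hy
      · exact Finset.mem_inter.mpr ⟨Finset.mem_of_mem_erase hx₁, Finset.mem_of_mem_erase hx₂⟩
      · rw [Finset.mem_singleton] at hy; subst hy
        exact Finset.mem_inter.mpr ⟨h₁.2, h₂.2⟩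
    have : ({x, p} : Finset α).card = 2 := Finset.card_pair hxp
    have := Finset.card_le_card hsub
    omega
  have hbiU : (Lp.biUnion (fun l => l.erase p)).card = Lp.card * (r - 1) := by
    rw [Finset.card_biUnion hdisj]
    rw [Finset.sum_congr rfl (fun l hl => ?_), Finset.sum_const, smul_eq_mul]
    rw [Finset.mem_filter] at hl
    rw [Finset.card_erase_of_mem hl.2, huniform l hl.1]
  have hbiUsub : Lp.biUnion (fun l => l.erase p) ⊆ P.erase p := by
    intro x hx
    rw [Finset.mem_biUnion] at hx
    obtain ⟨l, hl, hxl⟩ := hx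
    rw [Finset.mem_filter] at hl
    exact Finset.mem_erase.mpr ⟨Finset.ne_of_mem_erase hxl,
      hLS.2.1 l hl.1 (Finset.mem_of_mem_erase hxl)⟩
  have hPbound : Lp.card * (r - 1) + 1 ≤ P.card := by
    have h1 := Finset.card_le_card hbiUsub
    have h2 : (P.erase p).card = P.card - 1 := Finset.card_erase_of_mem hpP
    have h3 : 1 ≤ P.card := Finset.card_pos.mpr hPne
    omega
  -- lines bound: at most 2 lines of R contain p
  have hR2 : (R.filter (fun l => p ∈ l)).card ≤ 2 := by
    by_contra h
    push_neg at h
    obtain ⟨a, ha, b, hb, c, hc, hab, hac, hbc⟩ := Finset.two_lt_card.mp h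
    rw [Finset.mem_filter] at ha hb hc
    have := hRpack.2 a ha.1 b hb.1 c hc.1 hab hac hbc
    have hpin : p ∈ a ∩ b ∩ c := by
      simp [ha.2, hb.2, hc.2]
    rw [this] at hpin
    exact absurd hpin (Finset.notMem_empty p)
  set R' := R.filter (fun l => p ∉ l) with hR'
  have hR'card : ν - 2 ≤ R'.card := by
    have hsplit : (R.filter (fun l => p ∈ l)).card + R'.card = R.card := by
      simpa [hR'] using
        Finset.card_filter_add_card_filter_not (s := R) (p := fun l => p ∈ l)
    omega
  have hdisjLR : Disjoint Lp R' := by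
    rw [Finset.disjoint_left]
    intro l hlp hlr
    rw [Finset.mem_filter] at hlp hlr
    exact hlr.2 hlp.2
  have hLbound : Lp.card + R'.card ≤ L.card := by
    have hsub : Lp ∪ R' ⊆ L := by
      intro l hl
      rcases Finset.mem_union.mp hl with hl | hl
      · exact (Finset.mem_filter.mp hl).1
      · exact hRpack.1 (Finset.mem_filter.mp hl).1
    have := Finset.card_le_card hsub
    rwa [Finset.card_union_of_disjoint hdisjLR] at this
  -- combine
  have hLpν : ν - 1 ≤ Lp.card := by rw [hLpcard]; exact hdeg
  have key : (ν - 1) * (r - 1) + 1 ≤ P.card := by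
    calc (ν - 1) * (r - 1) + 1 ≤ Lp.card * (r - 1) + 1 :=
          Nat.add_le_add_right (Nat.mul_le_mul_right _ hLpν) 1
    _ ≤ P.card := hPbound
  have keyL : (ν - 1) + (ν - 2) ≤ L.card := by
    calc (ν - 1) + (ν - 2) ≤ Lp.card + R'.card := Nat.add_le_add hLpν hR'card
    _ ≤ L.card := hLbound
  have : (ν - 1) * (r + 1) = (ν - 1) * (r - 1) + 1 + ((ν - 1) + (ν - 2)) := by
    have h1 : ν - 1 ≥ 1 := by omega
    have : (ν - 1) * (r + 1) = (ν - 1) * (r - 1) + (ν - 1) * 2 := by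
      rw [← Nat.mul_add]
      congr 1
      omega
    omega
  omega
end

section
/- Let r ≥ 2 and let (P,ℒ) be an r-uniform linear system with at least one line, with maximum degree Δ ≥ ν₂ − 1, and whose transversal number satisfies τ ≤ ν₂ − 1, where ν₂ is the 2-packing number. Then (r+1)·τ ≤ |P| + |ℒ| (equivalently, τ ≤ (|P| + |ℒ|)/(r+1)). -/
open Finset

/-- In an `r`-uniform linear system (`r ≥ 2`) with at least one line,
`Δ ≥ ν₂ - 1` and `τ ≤ ν₂ - 1`, we have `(r+1)·τ ≤ |P| + |ℒ|`. -/
theorem stmt7 {α : Type*} [DecidableEq α] (P : Finset α) (L : Finset (Finset α))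
    (r : ℕ) (hr : 2 ≤ r) (hLS : IsLinearSystem P L)
    (huniform : ∀ l ∈ L, l.card = r) (hL : L.Nonempty)
    (hΔ : nu2 L - 1 ≤ maxDegree P L) (hτ : tau P L ≤ nu2 L - 1) :
    (r + 1) * tau P L ≤ P.card + L.card := by
  classical
  obtain ⟨hne, hsub, hint⟩ := hLS
  rcases Nat.eq_zero_or_pos (tau P L) with ht0 | ht0
  · simp [ht0]
  obtain ⟨l0, hl0⟩ := hL
  obtain ⟨x0, hx0⟩ := hne l0 hl0
  have hPne : P.Nonempty := ⟨x0, hsub l0 hl0 hx0⟩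
  obtain ⟨p, hpP, hpd⟩ := Finset.exists_mem_eq_sup P hPne (degree L)
  set D := degree L p with hD
  have hMD : maxDegree P L = D := hpd
  have htD : tau P L ≤ D := le_trans hτ (hMD ▸ hΔ)
  set Lp := L.filter (fun l => p ∈ l) with hLp
  have hDcard : D = Lp.card := rfl
  set S := Lp.biUnion (fun l => l.erase p) with hS
  have hdisj : ∀ l ∈ Lp, ∀ l' ∈ Lp, l ≠ l' → Disjoint (l.erase p) (l'.erase p) := by
    intro l hl l' hl' hne'
    rw [hLp, Finset.mem_filter] at hl hl'
    rw [Finset.disjoint_left]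
    intro x hx hx'
    have hxl : x ∈ l := Finset.mem_of_mem_erase hx
    have hxl' : x ∈ l' := Finset.mem_of_mem_erase hx'
    have hxp : x ≠ p := Finset.ne_of_mem_erase hx
    have h2 : 1 < (l ∩ l').card :=
      Finset.one_lt_card.2 ⟨p, Finset.mem_inter.2 ⟨hl.2, hl'.2⟩,
        x, Finset.mem_inter.2 ⟨hxl, hxl'⟩, Ne.symm hxp⟩
    have h1 := hint l hl.1 l' hl'.1 hne'
    omega
  have hScard : S.card = D * (r - 1) := by
    rw [hS, Finset.card_biUnion hdisj]
    have hc : ∀ l ∈ Lp, (l.erase p).card = r - 1 := by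
      intro l hl
      rw [hLp, Finset.mem_filter] at hl
      rw [Finset.card_erase_of_mem hl.2, huniform l hl.1]
    rw [Finset.sum_congr rfl hc, Finset.sum_const, smul_eq_mul, hDcard]
  have hpS : p ∉ S := by
    simp only [hS, Finset.mem_biUnion]
    rintro ⟨l, -, hl⟩
    exact Finset.notMem_erase p l hl
  have hPcard : D * (r - 1) + 1 ≤ P.card := by
    have hsubP : insert p S ⊆ P := by
      intro x hx
      rcases Finset.mem_insert.1 hx with rfl | hx
      · exact hpP
      · obtain ⟨l, hl, hxl⟩ := Finset.mem_biUnion.1 hx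
        exact hsub l (Finset.mem_filter.1 hl).1 (Finset.mem_of_mem_erase hxl)
    calc D * (r - 1) + 1 = (insert p S).card := by
          rw [Finset.card_insert_of_notMem hpS, hScard]
      _ ≤ P.card := Finset.card_le_card hsubP
  -- transversal p together with one point in each line not through p
  set g : Finset α → α := fun l => if h : l.Nonempty then h.choose else p with hg
  have hgl : ∀ l ∈ L, g l ∈ l := by
    intro l hl
    have h := hne l hl
    simp only [hg, dif_pos h]
    exact h.choose_spec
  set T' : Finset α := insert p ((L \ Lp).image g) with hT'
  have hT'trans : IsTransversal P L T' := by
    constructor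
    · intro x hx
      rcases Finset.mem_insert.1 hx with rfl | hx
      · exact hpP
      · obtain ⟨l, hl, rfl⟩ := Finset.mem_image.1 hx
        have hl' := (Finset.mem_sdiff.1 hl).1
        exact hsub l hl' (hgl l hl')
    · intro l hl
      by_cases hpl : p ∈ l
      · exact ⟨p, Finset.mem_inter.2 ⟨Finset.mem_insert_self _ _, hpl⟩⟩
      · have hlmem : l ∈ L \ Lp := Finset.mem_sdiff.2 ⟨hl, by
          rw [hLp, Finset.mem_filter]; tauto⟩
        exact ⟨g l, Finset.mem_inter.2
          ⟨Finset.mem_insert_of_mem (Finset.mem_image_of_mem g hlmem), hgl l hl⟩⟩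
  have htauT : tau P L ≤ T'.card := Nat.sInf_le ⟨T', hT'trans, rfl⟩
  have hT'card : T'.card ≤ (L \ Lp).card + 1 := by
    calc T'.card ≤ ((L \ Lp).image g).card + 1 := Finset.card_insert_le _ _
      _ ≤ (L \ Lp).card + 1 := by
          exact Nat.add_le_add_right Finset.card_image_le 1
  have hLsplit : L.card = D + (L \ Lp).card := by
    have hsubL : Lp ⊆ L := Finset.filter_subset _ _
    rw [Finset.card_sdiff_of_subset hsubL, hDcard]
    have := Finset.card_le_card hsubL
    omega
  -- final arithmetic
  obtain ⟨r', rfl⟩ : ∃ r', r = r' + 2 := ⟨r - 2, by omega⟩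
  have hr1 : r' + 2 - 1 = r' + 1 := rfl
  rw [hr1] at hPcard
  have key : (r' + 1) * tau P L ≤ (r' + 1) * D := Nat.mul_le_mul_left _ htD
  have hgoal : (r' + 2 + 1) * tau P L = (r' + 1) * tau P L + 2 * tau P L := by ring
  have hk := le_trans htauT hT'card
  nlinarith [key, hPcard, hLsplit, htD, hk, ht0]
end

section
/- Any linear system (P,ℒ) with 2-packing number ν₂ = 4 and maximum degree Δ ≥ 5 has transversal number τ ≤ 3 (that is, τ ≤ ν₂ − 1). -/
open Finset

set_option maxHeartbeats 1600000 in
/-- Any linear system with `ν₂ = 4` and `Δ ≥ 5` has `τ ≤ 3`. -/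
theorem stmt8 {α : Type*} [DecidableEq α] (P : Finset α) (L : Finset (Finset α))
    (hLS : IsLinearSystem P L) (hν : nu2 L = 4) (hΔ : 5 ≤ maxDegree P L) :
    tau P L ≤ 3 := by
  classical
  by_contra htau3
  -- every transversal has at least 4 points
  have H : ∀ T : Finset α, IsTransversal P L T → 4 ≤ T.card := by
    intro T hT
    have h1 : tau P L ≤ T.card := Nat.sInf_le ⟨T, hT, rfl⟩
    omega
  -- every 2-packing has at most 4 lines
  have hpack : ∀ R : Finset (Finset α), Is2Packing L R → R.card ≤ 4 := by
    intro R hR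
    have hbdd : BddAbove {n | ∃ R : Finset (Finset α), Is2Packing L R ∧ R.card = n} := by
      refine ⟨L.card, ?_⟩
      rintro n ⟨R', hR', rfl⟩
      exact Finset.card_le_card hR'.1
    have h2 : R.card ≤ nu2 L := le_csSup hbdd ⟨R, hR, rfl⟩
    omega
  have hne : ∀ l ∈ L, l.Nonempty := hLS.1
  have hsubP : ∀ l ∈ L, l ⊆ P := hLS.2.1
  have hlinpt : ∀ l ∈ L, ∀ l' ∈ L, l ≠ l' → ∀ x ∈ l ∩ l', ∀ y ∈ l ∩ l', x = y := by
    intro l hl l' hl' hnel x hx y hy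
    exact Finset.card_le_one.mp (hLS.2.2 l hl l' hl' hnel) x hx y hy
  -- max degree point
  have hPne : P.Nonempty := by
    rcases P.eq_empty_or_nonempty with h | h
    · rw [maxDegree, h] at hΔ; simp at hΔ
    · exact h
  obtain ⟨p, hpP, hpdeg⟩ := Finset.exists_mem_eq_sup P hPne (degree L)
  rw [maxDegree, hpdeg] at hΔ
  set L' := L.filter (fun l => p ∉ l) with hL'def
  have hL'mem : ∀ l ∈ L', l ∈ L ∧ p ∉ l := fun l hl => Finset.mem_filter.mp hl
  -- Step 1: L' has at least 3 lines
  have hL'3 : 3 ≤ L'.card := by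
    by_contra hcon
    push_neg at hcon
    set f : Finset α → α := fun l => if h : l.Nonempty then h.choose else p with hf
    have hfl : ∀ l ∈ L', f l ∈ l := by
      intro l hl
      have hl' : l.Nonempty := hne l (hL'mem l hl).1
      simp only [hf, dif_pos hl']
      exact hl'.choose_spec
    set T := insert p (L'.image f) with hT
    have hTrans : IsTransversal P L T := by
      constructor
      · intro x hx
        rcases Finset.mem_insert.mp hx with rfl | hx
        · exact hpP
        · obtain ⟨l, hl, rfl⟩ := Finset.mem_image.mp hx
          exact hsubP l (hL'mem l hl).1 (hfl l hl)
      · intro l hl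
        by_cases hpl : p ∈ l
        · exact ⟨p, Finset.mem_inter.mpr ⟨Finset.mem_insert_self _ _, hpl⟩⟩
        · have hl' : l ∈ L' := Finset.mem_filter.mpr ⟨hl, hpl⟩
          exact ⟨f l, Finset.mem_inter.mpr
            ⟨Finset.mem_insert_of_mem (Finset.mem_image_of_mem f hl'), hfl l hl'⟩⟩
    have h1 := H T hTrans
    have h2 : T.card ≤ (L'.image f).card + 1 := Finset.card_insert_le _ _
    have h3 : (L'.image f).card ≤ L'.card := Finset.card_image_le
    omega
  -- Step 2: three distinct lines of L' with empty common intersection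
  by_cases hex : ∃ l₁ ∈ L', ∃ l₂ ∈ L', ∃ l₃ ∈ L',
      l₁ ≠ l₂ ∧ l₁ ≠ l₃ ∧ l₂ ≠ l₃ ∧ l₁ ∩ l₂ ∩ l₃ = ∅
  case neg =>
    push_neg at hex
    obtain ⟨l₁, hl₁⟩ := Finset.card_pos.mp (by omega : 0 < L'.card)
    have herase : 2 ≤ (L'.erase l₁).card := by
      have := Finset.card_erase_of_mem hl₁; omega
    obtain ⟨l₂, hl₂e, l₃, hl₃e, hne23⟩ := Finset.one_lt_card.mp (show 1 < (L'.erase l₁).card by omega)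
    obtain ⟨hne21, hl₂⟩ := Finset.mem_erase.mp hl₂e
    obtain ⟨hne31, hl₃⟩ := Finset.mem_erase.mp hl₃e
    have hint : (l₁ ∩ l₂ ∩ l₃).Nonempty :=
        (hex l₁ hl₁ l₂ hl₂ l₃ hl₃ hne21.symm hne31.symm hne23)
    obtain ⟨q, hq⟩ := hint
    have hq12 : q ∈ l₁ ∩ l₂ := (Finset.mem_inter.mp hq).1
    have hq1 : q ∈ l₁ := (Finset.mem_inter.mp hq12).1
    have hq2 : q ∈ l₂ := (Finset.mem_inter.mp hq12).2
    set T : Finset α := {p, q} with hT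
    have hTrans : IsTransversal P L T := by
      constructor
      · intro x hx
        rcases Finset.mem_insert.mp hx with rfl | hx
        · exact hpP
        · rw [Finset.mem_singleton] at hx
          subst hx
          exact hsubP l₁ (hL'mem l₁ hl₁).1 hq1
      · intro l hl
        by_cases hpl : p ∈ l
        · exact ⟨p, Finset.mem_inter.mpr ⟨Finset.mem_insert_self _ _, hpl⟩⟩
        have hqT : q ∈ T := by simp [hT]
        have hl' : l ∈ L' := Finset.mem_filter.mpr ⟨hl, hpl⟩
        by_cases h1 : l = l₁
        · exact ⟨q, Finset.mem_inter.mpr ⟨hqT, h1 ▸ hq1⟩⟩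
        by_cases h2 : l = l₂
        · exact ⟨q, Finset.mem_inter.mpr ⟨hqT, h2 ▸ hq2⟩⟩
        have hint' : (l₁ ∩ l₂ ∩ l).Nonempty :=
            (hex l₁ hl₁ l₂ hl₂ l hl' hne21.symm (fun h => h1 h.symm) (fun h => h2 h.symm))
        obtain ⟨q', hq'⟩ := hint'
        have hq'12 : q' ∈ l₁ ∩ l₂ := (Finset.mem_inter.mp hq').1
        have hq'l : q' ∈ l := (Finset.mem_inter.mp hq').2
        have : q' = q := hlinpt l₁ (hL'mem l₁ hl₁).1 l₂ (hL'mem l₂ hl₂).1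
          hne21.symm q' hq'12 q hq12
        exact ⟨q, Finset.mem_inter.mpr ⟨hqT, this ▸ hq'l⟩⟩
    have h1 := H T hTrans
    have h2 : T.card ≤ 2 := by
      rw [hT]
      exact le_trans (Finset.card_insert_le _ _) (by simp)
    omega
  case pos =>
    obtain ⟨l₁, hl₁, l₂, hl₂, l₃, hl₃, hne12, hne13, hne23, hempty⟩ := hex
    obtain ⟨hl₁L, hpl₁⟩ := hL'mem l₁ hl₁
    obtain ⟨hl₂L, hpl₂⟩ := hL'mem l₂ hl₂
    obtain ⟨hl₃L, hpl₃⟩ := hL'mem l₃ hl₃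
    set Lp := L.filter (fun m => p ∈ m) with hLp
    have hLp5 : 5 ≤ Lp.card := hΔ
    have hLpmem : ∀ m ∈ Lp, m ∈ L ∧ p ∈ m := fun m hm => Finset.mem_filter.mp hm
    set bad : Finset α := (l₁ ∩ l₂) ∪ (l₁ ∩ l₃) ∪ (l₂ ∩ l₃) with hbad
    have hbadin : ∀ x ∈ bad, (x ∈ l₁ ∧ x ∈ l₂) ∨ (x ∈ l₁ ∧ x ∈ l₃) ∨ (x ∈ l₂ ∧ x ∈ l₃) := by
      intro x hx
      simpa [hbad, Finset.mem_union, Finset.mem_inter, or_assoc] using hx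
    have hbadcard : bad.card ≤ 3 := by
      have h1 := Finset.card_union_le ((l₁ ∩ l₂) ∪ (l₁ ∩ l₃)) (l₂ ∩ l₃)
      have h2 := Finset.card_union_le (l₁ ∩ l₂) (l₁ ∩ l₃)
      have h3 := hLS.2.2 l₁ hl₁L l₂ hl₂L hne12
      have h4 := hLS.2.2 l₁ hl₁L l₃ hl₃L hne13
      have h5 := hLS.2.2 l₂ hl₂L l₃ hl₃L hne23
      rw [hbad]
      omega
    set B := Lp.filter (fun m => (bad ∩ m).Nonempty) with hB
    have hBcard : B.card ≤ 3 := by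
      have hmap : B.card ≤ bad.card := by
        apply Finset.card_le_card_of_injOn
          (fun m => if h : (bad ∩ m).Nonempty then h.choose else p)
        · intro m hm
          have hm' : (bad ∩ m).Nonempty := (Finset.mem_filter.mp hm).2
          simp only [dif_pos hm']
          exact (Finset.mem_inter.mp hm'.choose_spec).1
        · intro m hm m' hm' heq
          rw [Finset.mem_coe] at hm hm'
          have h1 : (bad ∩ m).Nonempty := (Finset.mem_filter.mp hm).2
          have h2 : (bad ∩ m').Nonempty := (Finset.mem_filter.mp hm').2
          simp only [dif_pos h1, dif_pos h2] at heq
          by_contra hmm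
          set q := h1.choose with hqdef
          have hq1 := h1.choose_spec
          have hq2 := h2.choose_spec
          have hqbad : q ∈ bad := (Finset.mem_inter.mp hq1).1
          have hqm : q ∈ m := (Finset.mem_inter.mp hq1).2
          have hqm' : q ∈ m' := heq ▸ (Finset.mem_inter.mp hq2).2
          obtain ⟨hmL, hpm⟩ := hLpmem m ((Finset.mem_filter.mp hm).1)
          obtain ⟨hm'L, hpm'⟩ := hLpmem m' ((Finset.mem_filter.mp hm').1)
          have hqp : q = p := hlinpt m hmL m' hm'L hmm q
            (Finset.mem_inter.mpr ⟨hqm, hqm'⟩) p (Finset.mem_inter.mpr ⟨hpm, hpm'⟩)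
          rcases hbadin q hqbad with ⟨h, _⟩ | ⟨h, _⟩ | ⟨h, _⟩
          · exact hpl₁ (hqp ▸ h)
          · exact hpl₁ (hqp ▸ h)
          · exact hpl₂ (hqp ▸ h)
      omega
    have hgood : 2 ≤ (Lp \ B).card := by
      have := Finset.le_card_sdiff B Lp
      omega
    obtain ⟨m₁, hm₁g, m₂, hm₂g, hm₁m₂⟩ := Finset.one_lt_card.mp (show 1 < (Lp \ B).card by omega)
    have hm₁Lp := (Finset.mem_sdiff.mp hm₁g).1
    have hm₂Lp := (Finset.mem_sdiff.mp hm₂g).1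
    obtain ⟨hm₁L, hpm₁⟩ := hLpmem m₁ hm₁Lp
    obtain ⟨hm₂L, hpm₂⟩ := hLpmem m₂ hm₂Lp
    have hM : ∀ m, m ∈ Lp \ B → ∀ x, x ∈ bad → x ∉ m := by
      intro m hm x hx hxm
      have hnB := (Finset.mem_sdiff.mp hm).2
      exact hnB (Finset.mem_filter.mpr ⟨(Finset.mem_sdiff.mp hm).1,
        ⟨x, Finset.mem_inter.mpr ⟨hx, hxm⟩⟩⟩)
    have hM₁ : ∀ x, x ∈ bad → x ∉ m₁ := hM m₁ hm₁g
    have hM₂ : ∀ x, x ∈ bad → x ∉ m₂ := hM m₂ hm₂g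
    have hK12 : ∀ x, x ∈ l₁ → x ∈ l₂ → x ∈ bad := by
      intro x h1 h2
      simp only [hbad, Finset.mem_union, Finset.mem_inter]; tauto
    have hK13 : ∀ x, x ∈ l₁ → x ∈ l₃ → x ∈ bad := by
      intro x h1 h2
      simp only [hbad, Finset.mem_union, Finset.mem_inter]; tauto
    have hK23 : ∀ x, x ∈ l₂ → x ∈ l₃ → x ∈ bad := by
      intro x h1 h2
      simp only [hbad, Finset.mem_union, Finset.mem_inter]; tauto
    have hmm12 : ∀ x, x ∈ m₁ → x ∈ m₂ → x = p := by
      intro x h1 h2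
      exact hlinpt m₁ hm₁L m₂ hm₂L hm₁m₂ x (Finset.mem_inter.mpr ⟨h1, h2⟩) p
        (Finset.mem_inter.mpr ⟨hpm₁, hpm₂⟩)
    have hE : ∀ x, x ∈ l₁ → x ∈ l₂ → x ∈ l₃ → False := by
      intro x h1 h2 h3
      exact Finset.eq_empty_iff_forall_notMem.mp hempty x
        (Finset.mem_inter.mpr ⟨Finset.mem_inter.mpr ⟨h1, h2⟩, h3⟩)
    have hmne : ∀ m : Finset α, p ∈ m → ∀ l : Finset α, p ∉ l → m ≠ l :=
      fun m hm l hl h => hl (h ▸ hm)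
    have hm₁l₁ := hmne m₁ hpm₁ l₁ hpl₁
    have hm₁l₂ := hmne m₁ hpm₁ l₂ hpl₂
    have hm₁l₃ := hmne m₁ hpm₁ l₃ hpl₃
    have hm₂l₁ := hmne m₂ hpm₂ l₁ hpl₁
    have hm₂l₂ := hmne m₂ hpm₂ l₂ hpl₂
    have hm₂l₃ := hmne m₂ hpm₂ l₃ hpl₃
    set R : Finset (Finset α) := insert m₁ (insert m₂ {l₁, l₂, l₃}) with hR
    have hRsub : R ⊆ L := by
      intro l hl
      simp only [hR, Finset.mem_insert, Finset.mem_singleton] at hl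
      rcases hl with rfl | rfl | rfl | rfl | rfl
      · exact hm₁L
      · exact hm₂L
      · exact hl₁L
      · exact hl₂L
      · exact hl₃L
    have hRpack : Is2Packing L R := by
      refine ⟨hRsub, ?_⟩
      intro a ha b hb c hc hab hac hbc
      rw [Finset.eq_empty_iff_forall_notMem]
      intro x hx
      obtain ⟨hxab, hxc⟩ := Finset.mem_inter.mp hx
      obtain ⟨hxa, hxb⟩ := Finset.mem_inter.mp hxab
      have f1 : x ∈ m₁ → x ∈ m₂ → x ∈ l₁ → False :=
        fun h1 h2 h3 => hpl₁ (hmm12 x h1 h2 ▸ h3)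
      have f2 : x ∈ m₁ → x ∈ m₂ → x ∈ l₂ → False :=
        fun h1 h2 h3 => hpl₂ (hmm12 x h1 h2 ▸ h3)
      have f3 : x ∈ m₁ → x ∈ m₂ → x ∈ l₃ → False :=
        fun h1 h2 h3 => hpl₃ (hmm12 x h1 h2 ▸ h3)
      have g1 : x ∈ l₁ → x ∈ l₂ → x ∈ m₁ → False := fun h1 h2 h3 => hM₁ x (hK12 x h1 h2) h3
      have g2 : x ∈ l₁ → x ∈ l₃ → x ∈ m₁ → False := fun h1 h2 h3 => hM₁ x (hK13 x h1 h2) h3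
      have g3 : x ∈ l₂ → x ∈ l₃ → x ∈ m₁ → False := fun h1 h2 h3 => hM₁ x (hK23 x h1 h2) h3
      have g4 : x ∈ l₁ → x ∈ l₂ → x ∈ m₂ → False := fun h1 h2 h3 => hM₂ x (hK12 x h1 h2) h3
      have g5 : x ∈ l₁ → x ∈ l₃ → x ∈ m₂ → False := fun h1 h2 h3 => hM₂ x (hK13 x h1 h2) h3
      have g6 : x ∈ l₂ → x ∈ l₃ → x ∈ m₂ → False := fun h1 h2 h3 => hM₂ x (hK23 x h1 h2) h3
      have e0 : x ∈ l₁ → x ∈ l₂ → x ∈ l₃ → False := hE x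
      simp only [hR, Finset.mem_insert, Finset.mem_singleton] at ha hb hc
      rcases ha with rfl | rfl | rfl | rfl | rfl <;>
        rcases hb with rfl | rfl | rfl | rfl | rfl <;>
        rcases hc with rfl | rfl | rfl | rfl | rfl <;>
        first
          | exact hab rfl
          | exact hac rfl
          | exact hbc rfl
          | exact f1 hxa hxb hxc
          | exact f1 hxa hxc hxb
          | exact f1 hxb hxa hxc
          | exact f1 hxb hxc hxa
          | exact f1 hxc hxa hxb
          | exact f1 hxc hxb hxa
          | exact f2 hxa hxb hxc
          | exact f2 hxa hxc hxb
          | exact f2 hxb hxa hxc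
          | exact f2 hxb hxc hxa
          | exact f2 hxc hxa hxb
          | exact f2 hxc hxb hxa
          | exact f3 hxa hxb hxc
          | exact f3 hxa hxc hxb
          | exact f3 hxb hxa hxc
          | exact f3 hxb hxc hxa
          | exact f3 hxc hxa hxb
          | exact f3 hxc hxb hxa
          | exact g1 hxa hxb hxc
          | exact g1 hxa hxc hxb
          | exact g1 hxb hxa hxc
          | exact g1 hxb hxc hxa
          | exact g1 hxc hxa hxb
          | exact g1 hxc hxb hxa
          | exact g2 hxa hxb hxc
          | exact g2 hxa hxc hxb
          | exact g2 hxb hxa hxc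
          | exact g2 hxb hxc hxa
          | exact g2 hxc hxa hxb
          | exact g2 hxc hxb hxa
          | exact g3 hxa hxb hxc
          | exact g3 hxa hxc hxb
          | exact g3 hxb hxa hxc
          | exact g3 hxb hxc hxa
          | exact g3 hxc hxa hxb
          | exact g3 hxc hxb hxa
          | exact g4 hxa hxb hxc
          | exact g4 hxa hxc hxb
          | exact g4 hxb hxa hxc
          | exact g4 hxb hxc hxa
          | exact g4 hxc hxa hxb
          | exact g4 hxc hxb hxa
          | exact g5 hxa hxb hxc
          | exact g5 hxa hxc hxb
          | exact g5 hxb hxa hxc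
          | exact g5 hxb hxc hxa
          | exact g5 hxc hxa hxb
          | exact g5 hxc hxb hxa
          | exact g6 hxa hxb hxc
          | exact g6 hxa hxc hxb
          | exact g6 hxb hxa hxc
          | exact g6 hxb hxc hxa
          | exact g6 hxc hxa hxb
          | exact g6 hxc hxb hxa
          | exact e0 hxa hxb hxc
          | exact e0 hxa hxc hxb
          | exact e0 hxb hxa hxc
          | exact e0 hxb hxc hxa
          | exact e0 hxc hxa hxb
          | exact e0 hxc hxb hxa
    have hRcard : R.card = 5 := by
      rw [hR]
      rw [Finset.card_insert_of_notMem (by simp [hm₁m₂, hm₁l₁, hm₁l₂, hm₁l₃]),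
        Finset.card_insert_of_notMem (by simp [hm₂l₁, hm₂l₂, hm₂l₃]),
        Finset.card_insert_of_notMem (by simp [hne12, hne13]),
        Finset.card_insert_of_notMem (by simp [hne23]),
        Finset.card_singleton]
    have := hpack R hRpack
    omega
end

section
/- Let r ≥ 2. Any r-uniform linear system (P,ℒ) with 2-packing number ν₂ = 4 and maximum degree Δ ≥ 5 satisfies (r+1)·τ ≤ |P| + |ℒ| (equivalently, τ ≤ (|P| + |ℒ|)/(r+1)), where τ is the transversal number. -/
open Finset

/-- Any `r`-uniform linear system (`r ≥ 2`) with `ν₂ = 4` and `Δ ≥ 5`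
satisfies `(r+1)·τ ≤ |P| + |ℒ|`. -/
theorem stmt9 {α : Type*} [DecidableEq α] (P : Finset α) (L : Finset (Finset α))
    (r : ℕ) (hr : 2 ≤ r) (hLS : IsLinearSystem P L)
    (huniform : ∀ l ∈ L, l.card = r) (hν : nu2 L = 4) (hΔ : 5 ≤ maxDegree P L) :
    (r + 1) * tau P L ≤ P.card + L.card := by
  classical
  obtain ⟨hne, hsub, hlin⟩ := hLS
  -- find a point of degree ≥ 5
  have hPne : P.Nonempty := by
    by_contra h
    rw [not_nonempty_iff_eq_empty] at h
    simp [maxDegree, h] at hΔ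
  obtain ⟨p, hpP, hpdeg⟩ : ∃ p ∈ P, 5 ≤ degree L p := by
    obtain ⟨p, hp, hp2⟩ := Finset.exists_mem_eq_sup P hPne (degree L)
    exact ⟨p, hp, by rwa [maxDegree, hp2] at hΔ⟩
  set M : Finset (Finset α) := L.filter (fun l => p ∈ l) with hMdef
  set N : Finset (Finset α) := L.filter (fun l => p ∉ l) with hNdef
  have hM5 : 5 ≤ M.card := hpdeg
  have hMmem : ∀ l ∈ M, l ∈ L ∧ p ∈ l := by
    intro l hl; exact mem_filter.mp hl
  have hNmem : ∀ l ∈ N, l ∈ L ∧ p ∉ l := by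
    intro l hl; exact mem_filter.mp hl
  -- two distinct lines through p meet only at p
  have hMeet : ∀ l ∈ M, ∀ l' ∈ M, l ≠ l' → ∀ x ∈ l, x ∈ l' → x = p := by
    intro l hl l' hl' hne' x hx hx'
    have h1 := hlin l (hMmem l hl).1 l' (hMmem l' hl').1 hne'
    have hxm : x ∈ l ∩ l' := mem_inter.mpr ⟨hx, hx'⟩
    have hpm : p ∈ l ∩ l' := mem_inter.mpr ⟨(hMmem l hl).2, (hMmem l' hl').2⟩
    exact Finset.card_le_one.mp h1 x hxm p hpm
  -- no three lines avoiding p can have empty common intersection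
  have hpack : ∀ m₁ ∈ N, ∀ m₂ ∈ N, ∀ m₃ ∈ N, m₁ ≠ m₂ → m₁ ≠ m₃ → m₂ ≠ m₃ →
      m₁ ∩ m₂ ∩ m₃ ≠ ∅ := by
    intro m₁ hm₁ m₂ hm₂ m₃ hm₃ h12 h13 h23 h123
    -- at most one line of M meets mᵢ ∩ mⱼ, for each pair
    have hBcard : ∀ m ∈ N, ∀ m' ∈ N, m ≠ m' →
        (M.filter (fun l => (m ∩ m' ∩ l).Nonempty)).card ≤ 1 := by
      intro m hm m' hm' hmm'
      rw [Finset.card_le_one]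
      intro a ha b hb
      obtain ⟨haM, ⟨x, hx⟩⟩ := mem_filter.mp ha
      obtain ⟨hbM, ⟨y, hy⟩⟩ := mem_filter.mp hb
      simp only [mem_inter] at hx hy
      have hxy : x = y :=
        Finset.card_le_one.mp (hlin m (hNmem m hm).1 m' (hNmem m' hm').1 hmm')
          x (mem_inter.mpr ⟨hx.1.1, hx.1.2⟩) y (mem_inter.mpr ⟨hy.1.1, hy.1.2⟩)
      by_contra hab
      have := hMeet a haM b hbM hab x hx.2 (hxy ▸ hy.2)
      exact (hNmem m hm).2 (this ▸ hx.1.1)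
    set B : Finset (Finset α) :=
      (M.filter (fun l => (m₁ ∩ m₂ ∩ l).Nonempty)) ∪
      (M.filter (fun l => (m₁ ∩ m₃ ∩ l).Nonempty)) ∪
      (M.filter (fun l => (m₂ ∩ m₃ ∩ l).Nonempty)) with hBdef
    have hB3 : B.card ≤ 3 := by
      calc B.card ≤ (M.filter (fun l => (m₁ ∩ m₂ ∩ l).Nonempty) ∪
            M.filter (fun l => (m₁ ∩ m₃ ∩ l).Nonempty)).card +
            (M.filter (fun l => (m₂ ∩ m₃ ∩ l).Nonempty)).card := card_union_le _ _
        _ ≤ ((M.filter (fun l => (m₁ ∩ m₂ ∩ l).Nonempty)).card +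
            (M.filter (fun l => (m₁ ∩ m₃ ∩ l).Nonempty)).card) +
            (M.filter (fun l => (m₂ ∩ m₃ ∩ l).Nonempty)).card := by
              exact Nat.add_le_add_right (card_union_le _ _) _
        _ ≤ 1 + 1 + 1 := by
              gcongr
              · exact hBcard m₁ hm₁ m₂ hm₂ h12
              · exact hBcard m₁ hm₁ m₃ hm₃ h13
              · exact hBcard m₂ hm₂ m₃ hm₃ h23
        _ = 3 := rfl
    have hGood : 1 < (M \ B).card := by
      have := Finset.le_card_sdiff B M
      omega
    obtain ⟨l₁, hl₁, l₂, hl₂, hl₁₂⟩ := Finset.one_lt_card.mp hGood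
    have hl₁M : l₁ ∈ M := (mem_sdiff.mp hl₁).1
    have hl₂M : l₂ ∈ M := (mem_sdiff.mp hl₂).1
    have hgood : ∀ l, l ∈ M \ B →
        (¬(m₁ ∩ m₂ ∩ l).Nonempty) ∧ (¬(m₁ ∩ m₃ ∩ l).Nonempty) ∧
        (¬(m₂ ∩ m₃ ∩ l).Nonempty) := by
      intro l hl
      obtain ⟨hlM, hlB⟩ := mem_sdiff.mp hl
      simp only [hBdef, mem_union, mem_filter, not_or, not_and] at hlB
      exact ⟨fun h => hlB.1.1 hlM h, fun h => hlB.1.2 hlM h, fun h => hlB.2 hlM h⟩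
    obtain ⟨g112, g113, g123⟩ := hgood l₁ hl₁
    obtain ⟨g212, g213, g223⟩ := hgood l₂ hl₂
    -- distinctness
    have hpm₁ : p ∉ m₁ := (hNmem _ hm₁).2
    have hpm₂ : p ∉ m₂ := (hNmem _ hm₂).2
    have hpm₃ : p ∉ m₃ := (hNmem _ hm₃).2
    have hpl₁ : p ∈ l₁ := (hMmem _ hl₁M).2
    have hpl₂ : p ∈ l₂ := (hMmem _ hl₂M).2
    have hl₁m : ∀ m, p ∉ m → l₁ ≠ m := fun m hm h => hm (h ▸ hpl₁)
    have hl₂m : ∀ m, p ∉ m → l₂ ≠ m := fun m hm h => hm (h ▸ hpl₂)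
    set R : Finset (Finset α) := insert l₁ (insert l₂ {m₁, m₂, m₃}) with hRdef
    have hRcard : R.card = 5 := by
      rw [hRdef]
      rw [card_insert_of_notMem (by
        simp only [mem_insert, mem_singleton, not_or]
        exact ⟨hl₁₂, hl₁m m₁ hpm₁, hl₁m m₂ hpm₂, hl₁m m₃ hpm₃⟩)]
      rw [card_insert_of_notMem (by
        simp only [mem_insert, mem_singleton, not_or]
        exact ⟨hl₂m m₁ hpm₁, hl₂m m₂ hpm₂, hl₂m m₃ hpm₃⟩)]
      rw [card_insert_of_notMem (by simp [h12, h13]),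
        card_insert_of_notMem (by simp [h23]), card_singleton]
    have hRL : R ⊆ L := by
      intro l hl
      simp only [hRdef, mem_insert, mem_singleton] at hl
      rcases hl with rfl | rfl | rfl | rfl | rfl
      · exact (hMmem _ hl₁M).1
      · exact (hMmem _ hl₂M).1
      · exact (hNmem _ hm₁).1
      · exact (hNmem _ hm₂).1
      · exact (hNmem _ hm₃).1
    have hRpack : Is2Packing L R := by
      refine ⟨hRL, ?_⟩
      intro a ha b hb c hc hab hac hbc
      -- pointwise facts
      have g1 : ∀ x, x ∈ l₁ → x ∈ l₂ → x ∈ m₁ → False := fun x h1 h2 h3 =>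
        hpm₁ ((hMeet l₁ hl₁M l₂ hl₂M hl₁₂ x h1 h2) ▸ h3)
      have g2 : ∀ x, x ∈ l₁ → x ∈ l₂ → x ∈ m₂ → False := fun x h1 h2 h3 =>
        hpm₂ ((hMeet l₁ hl₁M l₂ hl₂M hl₁₂ x h1 h2) ▸ h3)
      have g3 : ∀ x, x ∈ l₁ → x ∈ l₂ → x ∈ m₃ → False := fun x h1 h2 h3 =>
        hpm₃ ((hMeet l₁ hl₁M l₂ hl₂M hl₁₂ x h1 h2) ▸ h3)
      have t0 : ∀ x, x ∈ m₁ → x ∈ m₂ → x ∈ m₃ → False := by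
        intro x h1 h2 h3
        have : x ∈ m₁ ∩ m₂ ∩ m₃ := by simp [h1, h2, h3]
        rw [h123] at this; exact notMem_empty x this
      have b112 : ∀ x, x ∈ m₁ → x ∈ m₂ → x ∈ l₁ → False := fun x h1 h2 h3 =>
        g112 ⟨x, by simp [h1, h2, h3]⟩
      have b113 : ∀ x, x ∈ m₁ → x ∈ m₃ → x ∈ l₁ → False := fun x h1 h2 h3 =>
        g113 ⟨x, by simp [h1, h2, h3]⟩
      have b123 : ∀ x, x ∈ m₂ → x ∈ m₃ → x ∈ l₁ → False := fun x h1 h2 h3 =>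
        g123 ⟨x, by simp [h1, h2, h3]⟩
      have b212 : ∀ x, x ∈ m₁ → x ∈ m₂ → x ∈ l₂ → False := fun x h1 h2 h3 =>
        g212 ⟨x, by simp [h1, h2, h3]⟩
      have b213 : ∀ x, x ∈ m₁ → x ∈ m₃ → x ∈ l₂ → False := fun x h1 h2 h3 =>
        g213 ⟨x, by simp [h1, h2, h3]⟩
      have b223 : ∀ x, x ∈ m₂ → x ∈ m₃ → x ∈ l₂ → False := fun x h1 h2 h3 =>
        g223 ⟨x, by simp [h1, h2, h3]⟩
      simp only [hRdef, mem_insert, mem_singleton] at ha hb hc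
      rw [eq_empty_iff_forall_notMem]
      simp only [mem_inter, not_and, and_imp]
      intro x hxa hxb hxc
      rcases ha with rfl | rfl | rfl | rfl | rfl <;>
        rcases hb with rfl | rfl | rfl | rfl | rfl <;>
          rcases hc with rfl | rfl | rfl | rfl | rfl <;>
            first
            | exact absurd rfl hab
            | exact absurd rfl hac
            | exact absurd rfl hbc
            | exact g1 x (by assumption) (by assumption) (by assumption)
            | exact g2 x (by assumption) (by assumption) (by assumption)
            | exact g3 x (by assumption) (by assumption) (by assumption)
            | exact t0 x (by assumption) (by assumption) (by assumption)
            | exact b112 x (by assumption) (by assumption) (by assumption)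
            | exact b113 x (by assumption) (by assumption) (by assumption)
            | exact b123 x (by assumption) (by assumption) (by assumption)
            | exact b212 x (by assumption) (by assumption) (by assumption)
            | exact b213 x (by assumption) (by assumption) (by assumption)
            | exact b223 x (by assumption) (by assumption) (by assumption)
    -- 5 ≤ nu2 L = 4, contradiction
    have hbdd : BddAbove {n | ∃ R : Finset (Finset α), Is2Packing L R ∧ R.card = n} := by
      refine ⟨L.card, ?_⟩
      rintro n ⟨R', hR', rfl⟩
      exact card_le_card hR'.1
    have h5 : (5 : ℕ) ∈ {n | ∃ R : Finset (Finset α), Is2Packing L R ∧ R.card = n} :=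
      ⟨R, hRpack, hRcard⟩
    have := le_csSup hbdd h5
    rw [← nu2, hν] at this
    omega
  -- construct a transversal of size ≤ 3
  have key : ∃ T : Finset α, IsTransversal P L T ∧ T.card ≤ 3 := by
    have htrans : ∀ T : Finset α, T ⊆ P → p ∈ T → (∀ m ∈ N, (T ∩ m).Nonempty) →
        IsTransversal P L T := by
      intro T hTP hpT hTN
      refine ⟨hTP, fun l hl => ?_⟩
      by_cases hpl : p ∈ l
      · exact ⟨p, mem_inter.mpr ⟨hpT, hpl⟩⟩
      · exact hTN l (mem_filter.mpr ⟨hl, hpl⟩)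
    by_cases hN2 : N.card ≤ 2
    · -- small N: pick a point from each line of N
      rcases Finset.eq_empty_or_nonempty N with hNe | ⟨m₁, hm₁⟩
      · refine ⟨{p}, htrans _ (by simp [hpP]) (mem_singleton_self p)
          (by simp [hNe]), by simp⟩
      · obtain ⟨q₁, hq₁⟩ := hne m₁ (hNmem _ hm₁).1
        rcases Finset.eq_empty_or_nonempty (N \ {m₁}) with hNe' | ⟨m₂, hm₂⟩
        · have hNsub : ∀ m ∈ N, m = m₁ := by
            intro m hm
            by_contra hmm
            exact (notMem_empty m) (hNe' ▸ mem_sdiff.mpr ⟨hm, by simp [hmm]⟩)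
          refine ⟨{p, q₁}, htrans _ ?_ (by simp) ?_, ?_⟩
          · intro x hx
            simp only [mem_insert, mem_singleton] at hx
            rcases hx with rfl | rfl
            · exact hpP
            · exact hsub m₁ (hNmem _ hm₁).1 hq₁
          · intro m hm
            rw [hNsub m hm]
            exact ⟨q₁, by simp [hq₁]⟩
          · exact le_trans (card_insert_le _ _) (by simp)
        · obtain ⟨hm₂N, hm₂₁⟩ := mem_sdiff.mp hm₂
          rw [mem_singleton] at hm₂₁
          obtain ⟨q₂, hq₂⟩ := hne m₂ (hNmem _ hm₂N).1
          have hNsub : ∀ m ∈ N, m = m₁ ∨ m = m₂ := by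
            intro m hm
            by_contra hmm
            push_neg at hmm
            have : ({m₁, m₂, m} : Finset (Finset α)) ⊆ N := by
              intro x hx
              simp only [mem_insert, mem_singleton] at hx
              rcases hx with rfl | rfl | rfl <;> assumption
            have hc : ({m₁, m₂, m} : Finset (Finset α)).card = 3 := by
              rw [card_insert_of_notMem, card_insert_of_notMem, card_singleton]
              · simp only [mem_singleton]
                exact fun h => hmm.2 h.symm
              · simp only [mem_insert, mem_singleton, not_or]
                exact ⟨fun h => hm₂₁ h.symm, fun h => hmm.1 h.symm⟩
            have := card_le_card this
            omega
          refine ⟨{p, q₁, q₂}, htrans _ ?_ (by simp) ?_, ?_⟩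
          · intro x hx
            simp only [mem_insert, mem_singleton] at hx
            rcases hx with rfl | rfl | rfl
            · exact hpP
            · exact hsub m₁ (hNmem _ hm₁).1 hq₁
            · exact hsub m₂ (hNmem _ hm₂N).1 hq₂
          · intro m hm
            rcases hNsub m hm with rfl | rfl
            · exact ⟨q₁, by simp [hq₁]⟩
            · exact ⟨q₂, by simp [hq₂]⟩
          · exact le_trans (card_insert_le _ _)
              (by have := card_insert_le q₁ ({q₂} : Finset α); rw [card_singleton] at this; omega)
    · -- N has ≥ 3 lines: all lines of N pass through a common point
      push_neg at hN2
      obtain ⟨m₁, hm₁, m₂, hm₂, h12⟩ := Finset.one_lt_card.mp (by omega : 1 < N.card)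
      have hx : ∃ x, x ∈ m₁ ∩ m₂ := by
        by_contra hx
        push_neg at hx
        have hemp : m₁ ∩ m₂ = ∅ := eq_empty_of_forall_notMem hx
        obtain ⟨m₃, hm₃⟩ : (N \ {m₁, m₂}).Nonempty := by
          rw [← card_pos]
          have h1 : ({m₁, m₂} : Finset (Finset α)).card ≤ 2 := card_insert_le _ _ |>.trans (by simp)
          have := Finset.le_card_sdiff ({m₁, m₂} : Finset (Finset α)) N
          omega
        obtain ⟨hm₃N, hm₃'⟩ := mem_sdiff.mp hm₃
        simp only [mem_insert, mem_singleton, not_or] at hm₃'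
        exact hpack m₁ hm₁ m₂ hm₂ m₃ hm₃N h12 (fun h => hm₃'.1 h.symm)
          (fun h => hm₃'.2 h.symm) (by rw [hemp, empty_inter])
      obtain ⟨x, hx⟩ := hx
      rw [mem_inter] at hx
      have hallx : ∀ m ∈ N, x ∈ m := by
        intro m hm
        by_contra hxm
        have hm1 : m ≠ m₁ := fun h => hxm (h ▸ hx.1)
        have hm2 : m ≠ m₂ := fun h => hxm (h ▸ hx.2)
        refine hpack m₁ hm₁ m₂ hm₂ m hm h12 (Ne.symm hm1) (Ne.symm hm2) ?_
        rw [eq_empty_iff_forall_notMem]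
        simp only [mem_inter, not_and, and_imp]
        intro y hy1 hy2 hym
        have : y = x :=
          Finset.card_le_one.mp (hlin m₁ (hNmem _ hm₁).1 m₂ (hNmem _ hm₂).1 h12)
            y (mem_inter.mpr ⟨hy1, hy2⟩) x (mem_inter.mpr hx)
        exact hxm (this ▸ hym)
      refine ⟨{p, x}, htrans _ ?_ (by simp) ?_, ?_⟩
      · intro y hy
        simp only [mem_insert, mem_singleton] at hy
        rcases hy with rfl | rfl
        · exact hpP
        · exact hsub m₁ (hNmem _ hm₁).1 hx.1
      · intro m hm
        exact ⟨x, by simp [hallx m hm]⟩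
      · exact le_trans (card_insert_le _ _) (by simp)
  obtain ⟨T, hT, hT3⟩ := key
  have htau : tau P L ≤ 3 := by
    have : tau P L ≤ T.card := Nat.sInf_le ⟨T, hT, rfl⟩
    omega
  -- lower bound on |P|: the 5 lines through p
  obtain ⟨M₅, hM₅M, hM₅c⟩ := Finset.exists_subset_card_eq hM5
  have hPbig : 1 + 5 * (r - 1) ≤ P.card := by
    have hFsub : insert p (M₅.biUnion (fun l => l.erase p)) ⊆ P := by
      intro x hx
      rcases mem_insert.mp hx with rfl | hx
      · exact hpP
      · obtain ⟨l, hl, hxl⟩ := mem_biUnion.mp hx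
        exact hsub l (hMmem l (hM₅M hl)).1 (erase_subset p l hxl)
    have hdisj : ∀ l₁ ∈ M₅, ∀ l₂ ∈ M₅, l₁ ≠ l₂ →
        Disjoint (l₁.erase p) (l₂.erase p) := by
      intro l₁ hl₁ l₂ hl₂ hne'
      rw [Finset.disjoint_left]
      intro x hx₁ hx₂
      have := hMeet l₁ (hM₅M hl₁) l₂ (hM₅M hl₂) hne' x
        (erase_subset p l₁ hx₁) (erase_subset p l₂ hx₂)
      exact (mem_erase.mp hx₁).1 this
    have hcard : (M₅.biUnion (fun l => l.erase p)).card = 5 * (r - 1) := by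
      rw [Finset.card_biUnion hdisj]
      have : ∀ l ∈ M₅, (l.erase p).card = r - 1 := by
        intro l hl
        rw [card_erase_of_mem (hMmem l (hM₅M hl)).2, huniform l (hMmem l (hM₅M hl)).1]
      rw [Finset.sum_congr rfl this, Finset.sum_const, hM₅c, smul_eq_mul]
    have hpnot : p ∉ M₅.biUnion (fun l => l.erase p) := by
      simp only [mem_biUnion, not_exists, not_and]
      intro l _ h
      exact (mem_erase.mp h).1 rfl
    have := card_le_card hFsub
    rw [card_insert_of_notMem hpnot, hcard] at this
    omega
  have hL5 : 5 ≤ L.card := le_trans hM5 (card_le_card (filter_subset _ _))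
  calc (r + 1) * tau P L ≤ (r + 1) * 3 := Nat.mul_le_mul_left _ htau
    _ ≤ P.card + L.card := by omega
end
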